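/- arXiv:2602.18440 — 13 statements merged into one kernel-verified Lean document; each statement's English description precedes it below -/
import Mathlib

section
/- Let Y₁, ..., Y_I ⊂ ℝⁿ be an equidistant spacing with I ≥ 2, and let 𝓘 ⊆ {1,...,I} with both 𝓘 and its complement nonempty. Then the affine hull of ⋃_{i ∈ 𝓘} Y_i and the affine hull of ⋃_{i ∈ 𝓘ᶜ} Y_i are orthogonal, i.e., any difference of two points in the first affine hull is orthogonal to any difference of two points in the second. -/
open RealInnerProductSpace

/-- A family of sets in ℝⁿ is an equidistant spacing if any two points from
distinct classes are at Euclidean distance exactly 1. -/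
def IsEquidistant {n I : ℕ} (Y : Fin I → Set (EuclideanSpace ℝ (Fin n))) : Prop :=
  ∀ i j : Fin I, i ≠ j → ∀ yi ∈ Y i, ∀ yj ∈ Y j, ‖yi - yj‖ = 1

lemma aux_inner {E : Type*} [NormedAddCommGroup E] [InnerProductSpace ℝ E]
    (a b u v : E) (h1 : ‖a - u‖ = 1) (h2 : ‖a - v‖ = 1) (h3 : ‖b - u‖ = 1)
    (h4 : ‖b - v‖ = 1) : ⟪a - b, u - v⟫ = 0 := by
  have e1 := norm_sub_sq_real a u
  have e2 := norm_sub_sq_real a v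
  have e3 := norm_sub_sq_real b u
  have e4 := norm_sub_sq_real b v
  rw [h1] at e1; rw [h2] at e2; rw [h3] at e3; rw [h4] at e4
  simp only [inner_sub_left, inner_sub_right]
  nlinarith [e1, e2, e3, e4]

/-- Strong Orthogonality: for an equidistant spacing and a nontrivial subset 𝓘 of
classes, the affine hull of the union over 𝓘 is orthogonal to the affine hull of
the union over the complement. -/
theorem strong_orthogonality {n I : ℕ} (hI : 2 ≤ I)
    (Y : Fin I → Set (EuclideanSpace ℝ (Fin n))) (hY : IsEquidistant Y)
    (S : Set (Fin I)) (hS : S.Nonempty) (hSc : Sᶜ.Nonempty) :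
    ∀ a ∈ affineSpan ℝ (⋃ i ∈ S, Y i), ∀ b ∈ affineSpan ℝ (⋃ i ∈ S, Y i),
    ∀ u ∈ affineSpan ℝ (⋃ i ∈ Sᶜ, Y i), ∀ v ∈ affineSpan ℝ (⋃ i ∈ Sᶜ, Y i),
      ⟪a - b, u - v⟫ = 0 := by
  intro a ha b hb u hu v hv
  set T : Set (EuclideanSpace ℝ (Fin n)) := ⋃ i ∈ S, Y i with hT
  set T' : Set (EuclideanSpace ℝ (Fin n)) := ⋃ i ∈ Sᶜ, Y i with hT'
  -- base case: differences of points in the sets are orthogonal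
  have base : ∀ x ∈ T -ᵥ T, ∀ y ∈ T' -ᵥ T', ⟪x, y⟫ = 0 := by
    rintro x hx y hy
    obtain ⟨p, hp, q, hq, rfl⟩ := Set.mem_vsub.mp hx
    obtain ⟨r, hr, s, hs, rfl⟩ := Set.mem_vsub.mp hy
    simp only [hT, hT', Set.mem_iUnion] at hp hq hr hs
    obtain ⟨ip, hipS, hp⟩ := hp
    obtain ⟨iq, hiqS, hq⟩ := hq
    obtain ⟨ir, hirS, hr⟩ := hr
    obtain ⟨is', hisS, hs⟩ := hs
    have hpr : ‖p - r‖ = 1 := hY ip ir (fun h => hirS (h ▸ hipS)) p hp r hr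
    have hps : ‖p - s‖ = 1 := hY ip is' (fun h => hisS (h ▸ hipS)) p hp s hs
    have hqr : ‖q - r‖ = 1 := hY iq ir (fun h => hirS (h ▸ hiqS)) q hq r hr
    have hqs : ‖q - s‖ = 1 := hY iq is' (fun h => hisS (h ▸ hiqS)) q hq s hs
    exact aux_inner p q r s hpr hps hqr hqs
  have hab : a - b ∈ Submodule.span ℝ (T -ᵥ T) := by
    rw [← vectorSpan_def, ← direction_affineSpan]
    exact AffineSubspace.vsub_mem_direction ha hb
  have huv : u - v ∈ Submodule.span ℝ (T' -ᵥ T') := by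
    rw [← vectorSpan_def, ← direction_affineSpan]
    exact AffineSubspace.vsub_mem_direction hu hv
  refine Submodule.span_induction (p := fun x _ => ⟪x, u - v⟫ = 0) ?_ ?_ ?_ ?_ hab
  · intro x hx
    refine Submodule.span_induction (p := fun y _ => ⟪x, y⟫ = 0) ?_ ?_ ?_ ?_ huv
    · intro y hy; exact base x hx y hy
    · simp
    · intro y z _ _ py pz; rw [inner_add_right, py, pz, add_zero]
    · intro c y _ py; rw [real_inner_smul_right, py, mul_zero]
  · simp
  · intro x y _ _ px py; rw [inner_add_left, px, py, add_zero]
  · intro c x _ px; rw [real_inner_smul_left, px, mul_zero]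
end

section
/- Let Y₁, ..., Y_I ⊂ ℝⁿ be an equidistant spacing with I ≥ 2. For each class i there exist a unique point c_i in the affine hull of Y_i and a radius r_i ∈ [0,1] such that ‖y - c_i‖ = r_i for all y ∈ Y_i; moreover, c_i equals the orthogonal projection of any point y_j ∈ Y_j (j ≠ i) onto the affine hull of Y_i. -/
open RealInnerProductSpace

/-- Key algebraic lemma: if `p` and `q` are both at distance 1 from `y` and `y'`,
then `p - q` is orthogonal to `y - y'`. -/
lemma inner_sub_eq_zero_of_dist {n : ℕ} {p q y y' : EuclideanSpace ℝ (Fin n)}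
    (hpy : ‖p - y‖ = 1) (hpy' : ‖p - y'‖ = 1) (hqy : ‖q - y‖ = 1) (hqy' : ‖q - y'‖ = 1) :
    ⟪y - y', p - q⟫ = 0 := by
  have e : ∀ a b : EuclideanSpace ℝ (Fin n), ‖a - b‖ ^ 2 = ‖a‖ ^ 2 - 2 * ⟪a, b⟫ + ‖b‖ ^ 2 :=
    fun a b => norm_sub_sq_real a b
  have h1 := e p y; have h2 := e p y'; have h3 := e q y; have h4 := e q y'
  rw [hpy] at h1; rw [hpy'] at h2; rw [hqy] at h3; rw [hqy'] at h4
  have expand : ⟪y - y', p - q⟫ = ⟪p, y⟫ - ⟪p, y'⟫ - ⟪q, y⟫ + ⟪q, y'⟫ := by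
    rw [inner_sub_left, inner_sub_right, inner_sub_right, real_inner_comm y p,
      real_inner_comm y q, real_inner_comm y' p, real_inner_comm y' q]
    ring
  rw [expand]; nlinarith [h1, h2, h3, h4]

/-- Projection Theorem: each class of an equidistant spacing has a unique center
`c` in its affine hull, at constant distance `r ∈ [0,1]` from all its points,
and `c` is the orthogonal projection onto the affine hull of any point of any
other class (i.e. the difference `y_j - c` is orthogonal to the affine hull). -/
theorem projection_theorem {n I : ℕ} (hI : 2 ≤ I)
    (Y : Fin I → Set (EuclideanSpace ℝ (Fin n)))
    (hne : ∀ i, (Y i).Nonempty) (hY : IsEquidistant Y) :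
    ∀ i : Fin I, ∃! c : EuclideanSpace ℝ (Fin n),
      c ∈ affineSpan ℝ (Y i) ∧
      ∃ r : ℝ, r ∈ Set.Icc (0 : ℝ) 1 ∧ (∀ y ∈ Y i, ‖y - c‖ = r) ∧
        ∀ j : Fin I, j ≠ i → ∀ yj ∈ Y j, ∀ z ∈ affineSpan ℝ (Y i),
          ⟪yj - c, z - c⟫ = 0 := by
  intro i
  -- pick an index j₀ ≠ i and a point y₀ ∈ Y j₀
  haveI : Nontrivial (Fin I) := Fin.nontrivial_iff_two_le.mpr hI
  obtain ⟨j₀, hj₀⟩ := exists_ne i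
  obtain ⟨y₀, hy₀⟩ := hne j₀
  obtain ⟨y₁, hy₁⟩ := hne i
  set s : AffineSubspace ℝ (EuclideanSpace ℝ (Fin n)) := affineSpan ℝ (Y i) with hs
  haveI : Nonempty s := ⟨⟨y₁, subset_affineSpan ℝ _ hy₁⟩⟩
  set c : EuclideanSpace ℝ (Fin n) := (↑(EuclideanGeometry.orthogonalProjection s y₀) : EuclideanSpace ℝ (Fin n)) with hc
  have hcmem : c ∈ s := (EuclideanGeometry.orthogonalProjection s y₀).2
  have hperp : y₀ - c ∈ s.directionᗮ := by
    simpa [hc] using EuclideanGeometry.vsub_orthogonalProjection_mem_direction_orthogonal s y₀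
  -- distance 1 facts
  have hdist : ∀ j : Fin I, j ≠ i → ∀ p ∈ Y j, ∀ y ∈ Y i, ‖p - y‖ = 1 := by
    intro j hj p hp y hy
    exact hY j i hj p hp y hy
  -- any difference of two points at distance 1 from all of Y i is orthogonal to the direction
  have hkey : ∀ p q : EuclideanSpace ℝ (Fin n), (∀ y ∈ Y i, ‖p - y‖ = 1) →
      (∀ y ∈ Y i, ‖q - y‖ = 1) → p - q ∈ s.directionᗮ := by
    intro p q hp hq
    rw [hs, direction_affineSpan, vectorSpan_def]
    intro u hu
    induction hu using Submodule.span_induction with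
    | mem u hu =>
        obtain ⟨y, hy, y', hy', rfl⟩ := hu
        have := inner_sub_eq_zero_of_dist (hp y hy) (hp y' hy') (hq y hy) (hq y' hy')
        simpa [vsub_eq_sub] using this
    | zero => simp
    | add u v _ _ hu hv => simp [inner_add_left, hu, hv]
    | smul a u _ hu => simp [inner_smul_left, hu]
  -- orthogonality of y₀ - c to any direction vector, as an inner product
  have hperp' : ∀ v ∈ s.direction, ⟪y₀ - c, v⟫ = 0 := by
    intro v hv
    have := (Submodule.mem_orthogonal _ _).mp hperp v hv
    rwa [real_inner_comm] at this
  -- Pythagoras: for y ∈ Y i, ‖y - c‖² = 1 - ‖y₀ - c‖²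
  have hpyth : ∀ y ∈ Y i, ‖y - c‖ ^ 2 = 1 - ‖y₀ - c‖ ^ 2 := by
    intro y hy
    have hyd : c - y ∈ s.direction :=
      AffineSubspace.vsub_mem_direction hcmem (subset_affineSpan ℝ _ hy)
    have hinner : ⟪y₀ - c, c - y⟫ = 0 := hperp' _ hyd
    have hsum : (y₀ - c) + (c - y) = y₀ - y := by abel
    have h1 : ‖y₀ - y‖ = 1 := hdist j₀ hj₀ y₀ hy₀ y hy
    have := norm_add_sq_real (y₀ - c) (c - y)
    rw [hsum, hinner, h1] at this
    have hcy : ‖c - y‖ = ‖y - c‖ := by rw [norm_sub_rev]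
    rw [hcy] at this; linarith
  set r : ℝ := ‖y₁ - c‖ with hr
  have hr1 : r ^ 2 = 1 - ‖y₀ - c‖ ^ 2 := hpyth y₁ hy₁
  -- the full property for c
  have hmain : ∀ j : Fin I, j ≠ i → ∀ yj ∈ Y j, ∀ z ∈ s, ⟪yj - c, z - c⟫ = 0 := by
    intro j hj yj hyj z hz
    have hzd : z - c ∈ s.direction := AffineSubspace.vsub_mem_direction hz hcmem
    have h1 : ⟪y₀ - c, z - c⟫ = 0 := hperp' _ hzd
    have h2 : yj - y₀ ∈ s.directionᗮ :=
      hkey yj y₀ (fun y hy => hdist j hj yj hyj y hy) (fun y hy => hdist j₀ hj₀ y₀ hy₀ y hy)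
    have h2' : ⟪yj - y₀, z - c⟫ = 0 := by
      have := (Submodule.mem_orthogonal _ _).mp h2 _ hzd
      rwa [real_inner_comm] at this
    have hsum : (yj - y₀) + (y₀ - c) = yj - c := by abel
    calc ⟪yj - c, z - c⟫ = ⟪(yj - y₀) + (y₀ - c), z - c⟫ := by rw [hsum]
      _ = 0 := by rw [inner_add_left, h1, h2']; ring
  refine ⟨c, ⟨hcmem, r, ⟨norm_nonneg _, ?_⟩, fun y hy => ?_, hmain⟩, ?_⟩
  · nlinarith [hr1, norm_nonneg (y₁ - c), sq_nonneg (‖y₀ - c‖)]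
  · have := hpyth y hy
    have h2 : ‖y - c‖ ^ 2 = r ^ 2 := by rw [this, hr1]
    exact (sq_eq_sq₀ (norm_nonneg _) (norm_nonneg _)).mp h2
  · -- uniqueness
    rintro c' ⟨hc'mem, r', -, -, hc'orth⟩
    have h1 : ⟪y₀ - c', c - c'⟫ = 0 := hc'orth j₀ hj₀ y₀ hy₀ c hcmem
    have h2 : ⟪y₀ - c, c' - c⟫ = 0 := hmain j₀ hj₀ y₀ hy₀ c' hc'mem
    have key : ⟪c' - c, c' - c⟫ = 0 := by
      have e1 : (y₀ - c) - (y₀ - c') = c' - c := by abel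
      have : ⟪(y₀ - c) - (y₀ - c'), c' - c⟫ = 0 := by
        rw [inner_sub_left, h2]
        have : ⟪y₀ - c', c' - c⟫ = 0 := by
          have := h1
          rw [show (c : EuclideanSpace ℝ (Fin n)) - c' = -(c' - c) by abel, inner_neg_right] at this
          linarith
        rw [this]; ring
      rwa [e1] at this
    have : c' - c = 0 := by
      have := real_inner_self_eq_norm_sq (c' - c)
      have hn : ‖c' - c‖ = 0 := by nlinarith [norm_nonneg (c' - c)]
      exact norm_eq_zero.mp hn
    have := sub_eq_zero.mp this
    exact this
end

section
/- Let Y₁, ..., Y_I ⊂ ℝⁿ be an equidistant spacing with I ≥ 2, with centers c_i (the circumcenter of Y_i within its affine hull) and radii r_i. Then for all i ≠ j: r_i² + r_j² ≤ 1 and ‖c_i - c_j‖² = 1 - r_i² - r_j². -/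
open RealInnerProductSpace

lemma inner_eq_on_span {E : Type*} [NormedAddCommGroup E] [InnerProductSpace ℝ E]
    {v : E} {t : ℝ} {S : Set E} (h : ∀ y ∈ S, ⟪y, v⟫ = t) {x : E}
    (hx : x ∈ affineSpan ℝ S) : ⟪x, v⟫ = t := by
  let f : E →ᵃ[ℝ] ℝ := ((innerSL ℝ v).toLinearMap).toAffineMap
  have hle : affineSpan ℝ S ≤ (affineSpan ℝ ({t} : Set ℝ)).comap f := by
    refine affineSpan_le.2 fun y hy => ?_
    rw [SetLike.mem_coe, AffineSubspace.mem_comap, AffineSubspace.mem_affineSpan_singleton]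
    simpa [f, real_inner_comm] using h y hy
  have := hle hx
  rw [AffineSubspace.mem_comap, AffineSubspace.mem_affineSpan_singleton] at this
  simpa [f, real_inner_comm] using this

lemma diff_sq_span {E : Type*} [NormedAddCommGroup E] [InnerProductSpace ℝ E]
    {a b : E} {α β : ℝ} {S : Set E} (ha : ∀ y ∈ S, ‖y - a‖ ^ 2 = α)
    (hb : ∀ y ∈ S, ‖y - b‖ ^ 2 = β) {x : E} (hx : x ∈ affineSpan ℝ S) :
    ‖x - a‖ ^ 2 - ‖x - b‖ ^ 2 = α - β := by
  have key : ∀ y : E, ‖y - a‖ ^ 2 - ‖y - b‖ ^ 2 = 2 * ⟪y, b - a⟫ + ‖a‖ ^ 2 - ‖b‖ ^ 2 := by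
    intro y
    rw [sq, sq, sq, sq, ← real_inner_self_eq_norm_mul_norm, ← real_inner_self_eq_norm_mul_norm,
      ← real_inner_self_eq_norm_mul_norm, ← real_inner_self_eq_norm_mul_norm]
    simp only [inner_sub_left, inner_sub_right, real_inner_comm a y,
      real_inner_comm b y]
    ring
  have hconst : ∀ y ∈ S, ⟪y, b - a⟫ = (α - β - ‖a‖ ^ 2 + ‖b‖ ^ 2) / 2 := by
    intro y hy
    have := key y
    rw [ha y hy, hb y hy] at this
    linarith
  have hx' := inner_eq_on_span hconst hx
  have := key x
  rw [hx'] at this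
  linarith

/-- Properties of equidistant spacings: with centers `c i` (the point of the
affine hull of `Y i` equidistant from all points of `Y i`) and radii `r i`, for
all distinct classes `i ≠ j` we have `r i ^ 2 + r j ^ 2 ≤ 1` and
`‖c i - c j‖ ^ 2 = 1 - r i ^ 2 - r j ^ 2`. -/
theorem center_radius_compatibility {n I : ℕ} (hI : 2 ≤ I)
    (Y : Fin I → Set (EuclideanSpace ℝ (Fin n)))
    (hne : ∀ i, (Y i).Nonempty) (hY : IsEquidistant Y)
    (c : Fin I → EuclideanSpace ℝ (Fin n)) (r : Fin I → ℝ)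
    (hc : ∀ i, c i ∈ affineSpan ℝ (Y i))
    (hr : ∀ i, ∀ y ∈ Y i, ‖y - c i‖ = r i) :
    ∀ i j : Fin I, i ≠ j →
      r i ^ 2 + r j ^ 2 ≤ 1 ∧ ‖c i - c j‖ ^ 2 = 1 - r i ^ 2 - r j ^ 2 := by
  intro i j hij
  have h1 : ∀ z ∈ Y j, ‖z - c i‖ ^ 2 = 1 - r i ^ 2 := by
    intro z hz
    have := diff_sq_span (a := z) (α := 1) (b := c i) (β := r i ^ 2) (S := Y i)
      (fun y hy => by rw [hY i j hij y hy z hz]; norm_num)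
      (fun y hy => by rw [hr i y hy]) (hc i)
    rw [sub_self, norm_zero] at this
    rw [norm_sub_rev]
    linarith
  have h2 := diff_sq_span (a := c i) (α := 1 - r i ^ 2) (b := c j) (β := r j ^ 2)
    (S := Y j) h1 (fun y hy => by rw [hr j y hy]) (hc j)
  rw [sub_self, norm_zero] at h2
  rw [norm_sub_rev] at h2
  constructor
  · nlinarith [sq_nonneg ‖c i - c j‖]
  · linarith
end

section
/- Let Y₁, ..., Y_I ⊂ ℝⁿ be an equidistant spacing with centers c₁, ..., c_I. Then for each i, the affine hull of Y_i is orthogonal to the affine hull of {c₁, ..., c_I}: for any y, y' ∈ Y_i and any j, k, we have ⟨y - y', c_j - c_k⟩ = 0. -/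
open RealInnerProductSpace

lemma inner_const_on_affineSpan {n : ℕ} (v : EuclideanSpace ℝ (Fin n))
    (s : Set (EuclideanSpace ℝ (Fin n))) (C : ℝ)
    (h : ∀ z ∈ s, ⟪v, z⟫ = C) :
    ∀ p ∈ affineSpan ℝ s, ⟪v, p⟫ = C := by
  intro p hp
  refine affineSpan_induction (p := fun q => ⟪v, q⟫ = C) hp h ?_
  intro a u w x hu hw hx
  simp only [vsub_eq_sub, vadd_eq_add, inner_add_right, inner_smul_right,
    inner_sub_right, hu, hw, hx]
  ring

/-- Tri-part Orthogonality: for each class of an equidistant spacing, the affine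
hull of the class is orthogonal to the affine hull of the set of centers. -/
theorem tri_part_orthogonality {n I : ℕ} (hI : 2 ≤ I)
    (Y : Fin I → Set (EuclideanSpace ℝ (Fin n)))
    (hne : ∀ i, (Y i).Nonempty) (hY : IsEquidistant Y)
    (c : Fin I → EuclideanSpace ℝ (Fin n)) (r : Fin I → ℝ)
    (hc : ∀ i, c i ∈ affineSpan ℝ (Y i))
    (hr : ∀ i, ∀ y ∈ Y i, ‖y - c i‖ = r i) :
    ∀ i : Fin I, ∀ y ∈ Y i, ∀ y' ∈ Y i, ∀ j k : Fin I,
      ⟪y - y', c j - c k⟫ = 0 := by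
  intro i y hy y' hy' j k
  -- key: ⟪y - y', c m⟫ = (‖y‖² - ‖y'‖²)/2 for every m
  have key : ∀ m : Fin I, ⟪y - y', c m⟫ = (‖y‖ ^ 2 - ‖y'‖ ^ 2) / 2 := by
    intro m
    have step : ∀ z, ‖y - z‖ = ‖y' - z‖ → ⟪y - y', z⟫ = (‖y‖ ^ 2 - ‖y'‖ ^ 2) / 2 := by
      intro z hz
      have h1 : ‖y - z‖ ^ 2 = ‖y' - z‖ ^ 2 := by rw [hz]
      rw [norm_sub_sq_real, norm_sub_sq_real] at h1
      rw [inner_sub_left]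
      linarith
    rcases eq_or_ne m i with rfl | hmi
    · exact step _ (by rw [hr m y hy, hr m y' hy'])
    · refine inner_const_on_affineSpan _ _ _ ?_ _ (hc m)
      intro z hz
      exact step z (by rw [hY i m (Ne.symm hmi) y hy z hz, hY i m (Ne.symm hmi) y' hy' z hz])
  rw [inner_sub_right, key j, key k, sub_self]
end

section
/- Let r₁, ..., r_I ∈ [0,1] and c₁, ..., c_I ∈ ℝⁿ satisfy ‖c_i - c_j‖² = 1 - r_i² - r_j² for all i ≠ j. Let V₁, ..., V_I be pairwise orthogonal linear subspaces of ℝⁿ, each orthogonal to span{c_j - c_k : j,k}, with dim V_i > 0 whenever r_i > 0. Define Y_i := {y ∈ c_i + V_i : ‖y - c_i‖ = r_i}. Then Y₁, ..., Y_I is an equidistant spacing: ‖y_i - y_j‖ = 1 for all y_i ∈ Y_i, y_j ∈ Y_j with i ≠ j. -/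
open RealInnerProductSpace

/-- Construction of Equidistant Spacings: given compatible radii, centers and
pairwise-orthogonal direction subspaces (each orthogonal to the span of the
differences of centers, with positive dimension whenever the corresponding
radius is positive), the spheres `Y i = {y ∈ c i + V i : ‖y - c i‖ = r i}` form
an equidistant spacing: any two points from distinct classes are at distance 1. -/
theorem construction_of_equidistant_spacings {n I : ℕ}
    (r : Fin I → ℝ) (hr : ∀ i, r i ∈ Set.Icc (0 : ℝ) 1)
    (c : Fin I → EuclideanSpace ℝ (Fin n))
    (hcc : ∀ i j : Fin I, i ≠ j → ‖c i - c j‖ ^ 2 = 1 - r i ^ 2 - r j ^ 2)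
    (V : Fin I → Submodule ℝ (EuclideanSpace ℝ (Fin n)))
    (hVo : ∀ i j : Fin I, i ≠ j → ∀ v ∈ V i, ∀ w ∈ V j, ⟪v, w⟫ = 0)
    (hVc : ∀ i : Fin I, ∀ v ∈ V i, ∀ j k : Fin I, ⟪v, c j - c k⟫ = 0)
    (hdim : ∀ i, 0 < r i → 0 < Module.finrank ℝ (V i)) :
    ∀ i j : Fin I, i ≠ j →
      ∀ yi : EuclideanSpace ℝ (Fin n), yi - c i ∈ V i → ‖yi - c i‖ = r i →
      ∀ yj : EuclideanSpace ℝ (Fin n), yj - c j ∈ V j → ‖yj - c j‖ = r j →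
        ‖yi - yj‖ = 1 := by
  intro i j hij yi hyiV hyir yj hyjV hyjr
  have hab : ⟪yi - c i, c i - c j⟫ = 0 := hVc i _ hyiV i j
  have had : ⟪yi - c i, yj - c j⟫ = 0 := hVo i j hij _ hyiV _ hyjV
  have hbd : ⟪c i - c j, yj - c j⟫ = 0 := by
    rw [real_inner_comm]; exact hVc j _ hyjV i j
  have key : ‖yi - yj‖ ^ 2 = 1 := by
    have h1 : yi - yj = (yi - c i) + (c i - c j) - (yj - c j) := by abel
    generalize ha : yi - c i = a at *
    generalize hb : c i - c j = b at *
    generalize hd : yj - c j = d at *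
    rw [h1, ← real_inner_self_eq_norm_sq]
    simp only [inner_sub_left, inner_sub_right, inner_add_left, inner_add_right]
    have hba : ⟪b, a⟫ = (0:ℝ) := by rw [real_inner_comm]; exact hab
    have hda : ⟪d, a⟫ = (0:ℝ) := by rw [real_inner_comm]; exact had
    have hdb : ⟪d, b⟫ = (0:ℝ) := by rw [real_inner_comm]; exact hbd
    rw [hba, hda, hdb, real_inner_self_eq_norm_sq, real_inner_self_eq_norm_sq,
      real_inner_self_eq_norm_sq, hyir, hyjr]
    have h2 := hcc i j hij
    rw [hb] at h2
    linarith [h2, hab, had, hbd]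
  nlinarith [norm_nonneg (yi - yj), key]
end

section
/- Let Y₁, ..., Y_I ⊂ ℝⁿ be an equidistant spacing with centers c₁, ..., c_I, and let c*_I be the orthogonal projection of c_I onto the affine hull of {c₁, ..., c_{I-1}}. Define Y'_I := Y_I ∪ refl_{c*_I}(Y_I), where refl_{c*_I}(y) = 2c*_I - y is point reflection through c*_I. Then Y₁, ..., Y_{I-1}, Y'_I is also an equidistant spacing. -/
open RealInnerProductSpace

/-- If a vector is orthogonal to all differences of points of `s`, it is
orthogonal to the vector span of `s`. -/
lemma perp_vectorSpan_of_forall_sub {E : Type*} [NormedAddCommGroup E]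
    [InnerProductSpace ℝ E] (u : E) (s : Set E)
    (h : ∀ a ∈ s, ∀ b ∈ s, ⟪a - b, u⟫ = 0) :
    ∀ v ∈ vectorSpan ℝ s, ⟪v, u⟫ = 0 := by
  intro v hv
  rw [vectorSpan_def] at hv
  induction hv using Submodule.span_induction with
  | mem x hx =>
    obtain ⟨a, ha, b, hb, rfl⟩ := hx
    exact h a ha b hb
  | zero => simp
  | add x y _ _ hx hy => rw [inner_add_left, hx, hy]; ring
  | smul r x _ hx => rw [real_inner_smul_left, hx]; ring

/-- Ortho-Reflection Lemma: let `c i` be the centers of an equidistant spacing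
and let `cstar` be the orthogonal projection of the center of the distinguished
class `i₀` onto the affine hull of the other centers.  Enlarging class `i₀` by
its point-reflection through `cstar` again yields an equidistant spacing. -/
theorem ortho_reflection_lemma {n I : ℕ}
    (Y : Fin I → Set (EuclideanSpace ℝ (Fin n)))
    (hne : ∀ i, (Y i).Nonempty) (hY : IsEquidistant Y)
    (c : Fin I → EuclideanSpace ℝ (Fin n)) (r : Fin I → ℝ)
    (hc : ∀ i, c i ∈ affineSpan ℝ (Y i))
    (hr : ∀ i, ∀ y ∈ Y i, ‖y - c i‖ = r i)
    (i₀ : Fin I) (cstar : EuclideanSpace ℝ (Fin n))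
    (hcs1 : cstar ∈ affineSpan ℝ (c '' {i | i ≠ i₀}))
    (hcs2 : ∀ z ∈ affineSpan ℝ (c '' {i | i ≠ i₀}),
      ⟪c i₀ - cstar, z - cstar⟫ = 0) :
    IsEquidistant
      (Function.update Y i₀ (Y i₀ ∪ (fun y => (2 : ℝ) • cstar - y) '' Y i₀)) := by
  classical
  set S : Set (EuclideanSpace ℝ (Fin n)) := c '' {i | i ≠ i₀} with hS
  -- membership of "point minus corresponding center" in the vector span
  have memV : ∀ i : Fin I, ∀ y ∈ Y i, y - c i ∈ vectorSpan ℝ (Y i) := by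
    intro i y hy
    have := AffineSubspace.vsub_mem_direction
      (subset_affineSpan ℝ (Y i) hy) (hc i)
    rwa [direction_affineSpan] at this
  have memV' : ∀ i : Fin I, ∀ y ∈ Y i, c i - y ∈ vectorSpan ℝ (Y i) := by
    intro i y hy
    have := AffineSubspace.vsub_mem_direction
      (hc i) (subset_affineSpan ℝ (Y i) hy)
    rwa [direction_affineSpan] at this
  -- F1: differences within distinct classes are orthogonal
  have F1 : ∀ i j : Fin I, i ≠ j → ∀ y ∈ Y i, ∀ y' ∈ Y i, ∀ w ∈ Y j, ∀ w' ∈ Y j,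
      ⟪y - y', w - w'⟫ = 0 := by
    intro i j hij y hy y' hy' w hw w' hw'
    have h1 := hY i j hij y hy w hw
    have h2 := hY i j hij y hy w' hw'
    have h3 := hY i j hij y' hy' w hw
    have h4 := hY i j hij y' hy' w' hw'
    have key : ⟪y - y', w - w'⟫
        = (‖y - w'‖^2 + ‖y' - w‖^2 - ‖y - w‖^2 - ‖y' - w'‖^2) / 2 := by
      simp only [norm_sub_sq_real, inner_sub_left, inner_sub_right]
      ring
    rw [key, h1, h2, h3, h4]; norm_num
  -- F2: differences within class i are orthogonal to (w - c i) for w outside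
  have F2 : ∀ i j : Fin I, i ≠ j → ∀ y ∈ Y i, ∀ y' ∈ Y i, ∀ w ∈ Y j,
      ⟪y - y', w - c i⟫ = 0 := by
    intro i j hij y hy y' hy' w hw
    have h1 := hY i j hij y hy w hw
    have h3 := hY i j hij y' hy' w hw
    have e1 : ‖(y - c i) - (w - c i)‖ = 1 := by
      rw [show (y - c i) - (w - c i) = y - w by abel]; exact h1
    have e3 : ‖(y' - c i) - (w - c i)‖ = 1 := by
      rw [show (y' - c i) - (w - c i) = y' - w by abel]; exact h3
    have q1 : ‖y - c i‖^2 - 2 * ⟪y - c i, w - c i⟫ + ‖w - c i‖^2 = 1 := by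
      rw [← norm_sub_sq_real, e1]; norm_num
    have q3 : ‖y' - c i‖^2 - 2 * ⟪y' - c i, w - c i⟫ + ‖w - c i‖^2 = 1 := by
      rw [← norm_sub_sq_real, e3]; norm_num
    rw [hr i y hy] at q1
    rw [hr i y' hy'] at q3
    have : ⟪y - c i, w - c i⟫ = ⟪y' - c i, w - c i⟫ := by linarith
    rw [show y - y' = (y - c i) - (y' - c i) by abel, inner_sub_left, this]
    ring
  -- F2v: the vector span of class i is orthogonal to (w - c i) for w outside
  have F2v : ∀ i j : Fin I, i ≠ j → ∀ w ∈ Y j, ∀ v ∈ vectorSpan ℝ (Y i),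
      ⟪v, w - c i⟫ = 0 := by
    intro i j hij w hw
    exact perp_vectorSpan_of_forall_sub _ _ (fun a ha b hb => F2 i j hij a ha b hb w hw)
  -- VV: vector spans of distinct classes are orthogonal
  have VV : ∀ i j : Fin I, i ≠ j → ∀ v ∈ vectorSpan ℝ (Y i),
      ∀ v' ∈ vectorSpan ℝ (Y j), ⟪v, v'⟫ = 0 := by
    intro i j hij v hv
    have step1 : ∀ a ∈ Y j, ∀ b ∈ Y j, ⟪a - b, v⟫ = 0 := by
      intro a ha b hb
      rw [real_inner_comm]
      exact perp_vectorSpan_of_forall_sub _ _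
        (fun y hy y' hy' => F1 i j hij y hy y' hy' a ha b hb) v hv
    intro v' hv'
    rw [real_inner_comm]
    exact perp_vectorSpan_of_forall_sub _ _ step1 v' hv'
  -- core orthogonality: ⟪y - cstar, yj - cstar⟫ = 0
  have core : ∀ j : Fin I, j ≠ i₀ → ∀ y ∈ Y i₀, ∀ yj ∈ Y j,
      ⟪y - cstar, yj - cstar⟫ = 0 := by
    intro j hj y hy yj hyj
    have hji : i₀ ≠ j := fun h => hj h.symm
    have hu0 : y - c i₀ ∈ vectorSpan ℝ (Y i₀) := memV i₀ y hy
    have hvj : yj - c j ∈ vectorSpan ℝ (Y j) := memV j yj hyj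
    have hmemS : ∀ k : Fin I, k ≠ i₀ → c k ∈ affineSpan ℝ S :=
      fun k hk => subset_affineSpan ℝ S ⟨k, hk, rfl⟩
    have hdjW : c j - cstar ∈ vectorSpan ℝ S := by
      have := AffineSubspace.vsub_mem_direction (hmemS j hj) hcs1
      rwa [direction_affineSpan] at this
    -- u0 ⊥ W
    have hu0W : ∀ w ∈ vectorSpan ℝ S, ⟪w, y - c i₀⟫ = 0 := by
      apply perp_vectorSpan_of_forall_sub
      rintro _ ⟨k, hk, rfl⟩ _ ⟨l, hl, rfl⟩
      have anchor : ∀ m : Fin I, m ≠ i₀ → ⟪c m - c i₀, y - c i₀⟫ = 0 := by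
        intro m hm
        obtain ⟨w, hw⟩ := hne m
        rw [show c m - c i₀ = (c m - w) + (w - c i₀) by abel, inner_add_left]
        have t1 : ⟪c m - w, y - c i₀⟫ = 0 :=
          VV m i₀ hm _ (memV' m w hw) _ hu0
        have t2 : ⟪y - c i₀, w - c i₀⟫ = 0 := F2v i₀ m hm.symm w hw _ hu0
        rw [t1, real_inner_comm, t2]; ring
      rw [show c k - c l = (c k - c i₀) - (c l - c i₀) by abel, inner_sub_left,
        anchor k hk, anchor l hl]
      ring
    -- vj ⊥ W
    have hvjW : ∀ w ∈ vectorSpan ℝ S, ⟪w, yj - c j⟫ = 0 := by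
      apply perp_vectorSpan_of_forall_sub
      rintro _ ⟨k, hk, rfl⟩ _ ⟨l, hl, rfl⟩
      have anchor : ∀ m : Fin I, m ≠ i₀ → ⟪c m - c j, yj - c j⟫ = 0 := by
        intro m hm
        by_cases hmj : m = j
        · subst hmj; simp
        · obtain ⟨w, hw⟩ := hne m
          rw [show c m - c j = (c m - w) + (w - c j) by abel, inner_add_left]
          have t1 : ⟪c m - w, yj - c j⟫ = 0 :=
            VV m j hmj _ (memV' m w hw) _ hvj
          have t2 : ⟪yj - c j, w - c j⟫ = 0 := F2v j m (fun h => hmj h.symm) w hw _ hvj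
          rw [t1, real_inner_comm, t2]; ring
      rw [show c k - c l = (c k - c j) - (c l - c j) by abel, inner_sub_left,
        anchor k hk, anchor l hl]
      ring
    -- assemble the four terms
    have T1 : ⟪y - c i₀, yj - c j⟫ = 0 := VV i₀ j hji _ hu0 _ hvj
    have T2 : ⟪y - c i₀, c j - cstar⟫ = 0 := by
      rw [real_inner_comm]; exact hu0W _ hdjW
    have T3 : ⟪c i₀ - cstar, yj - c j⟫ = 0 := by
      obtain ⟨w₀, hw₀⟩ := hne i₀
      rw [show c i₀ - cstar = (c i₀ - w₀) + (w₀ - c j) + (c j - cstar) by abel,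
        inner_add_left, inner_add_left]
      have t1 : ⟪c i₀ - w₀, yj - c j⟫ = 0 := VV i₀ j hji _ (memV' i₀ w₀ hw₀) _ hvj
      have t2 : ⟪yj - c j, w₀ - c j⟫ = 0 := F2v j i₀ hj w₀ hw₀ _ hvj
      have t3 : ⟪c j - cstar, yj - c j⟫ = 0 := hvjW _ hdjW
      rw [t1, t3, real_inner_comm, t2]; ring
    have T4 : ⟪c i₀ - cstar, c j - cstar⟫ = 0 := hcs2 _ (hmemS j hj)
    rw [show y - cstar = (y - c i₀) + (c i₀ - cstar) by abel,
      show yj - cstar = (yj - c j) + (c j - cstar) by abel,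
      inner_add_left, inner_add_right, inner_add_right, T1, T2, T3, T4]
    ring
  -- the distance from a reflected point to a point of another class is 1
  have main : ∀ j : Fin I, j ≠ i₀ → ∀ y ∈ Y i₀, ∀ yj ∈ Y j,
      ‖((2 : ℝ) • cstar - y) - yj‖ = 1 := by
    intro j hj y hy yj hyj
    have horth := core j hj y hy yj hyj
    have h1 : ‖(y - cstar) - (yj - cstar)‖ = 1 := by
      rw [show (y - cstar) - (yj - cstar) = y - yj by abel]
      exact hY i₀ j (fun h => hj h.symm) y hy yj hyj
    have hrw : (2 : ℝ) • cstar - y - yj = -((y - cstar) + (yj - cstar)) := by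
      rw [two_smul]; abel
    rw [hrw, norm_neg]
    have hsq : ‖(y - cstar) + (yj - cstar)‖^2 = 1 := by
      rw [norm_add_sq_real, horth]
      have : ‖(y - cstar) - (yj - cstar)‖^2 = 1 := by rw [h1]; norm_num
      rw [norm_sub_sq_real, horth] at this
      linarith
    calc ‖(y - cstar) + (yj - cstar)‖
        = Real.sqrt (‖(y - cstar) + (yj - cstar)‖^2) := by
          rw [Real.sqrt_sq (norm_nonneg _)]
      _ = 1 := by rw [hsq, Real.sqrt_one]
  -- final assembly
  intro i j hij yi hyi yj hyj
  by_cases hi : i = i₀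
  · subst hi
    rw [Function.update_self] at hyi
    rw [Function.update_of_ne (Ne.symm hij)] at hyj
    rcases hyi with hyi | ⟨y, hy, rfl⟩
    · exact hY i j hij yi hyi yj hyj
    · exact main j (Ne.symm hij) y hy yj hyj
  · rw [Function.update_of_ne hi] at hyi
    by_cases hj : j = i₀
    · subst hj
      rw [Function.update_self] at hyj
      rcases hyj with hyj | ⟨y, hy, rfl⟩
      · exact hY i j hij yi hyi yj hyj
      · rw [norm_sub_rev]
        exact main i hi y hy yi hyi
    · rw [Function.update_of_ne hj] at hyj
      exact hY i j hij yi hyi yj hyj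
end

section
/- Let Y₁, ..., Y_I ⊂ ℝⁿ be a maximal equidistant spacing (maximal under inclusion among equidistant spacings with I classes in ℝⁿ) with centers c₁, ..., c_I. Then c_I lies in the affine hull of {c₁, ..., c_{I-1}}. -/
open RealInnerProductSpace

/-- An equidistant spacing is maximal if it cannot be enlarged class-wise while
remaining an equidistant spacing. -/
def IsMaximalEquidistant {n I : ℕ} (Y : Fin I → Set (EuclideanSpace ℝ (Fin n))) : Prop :=
  IsEquidistant Y ∧
    ∀ Y' : Fin I → Set (EuclideanSpace ℝ (Fin n)),
      IsEquidistant Y' → (∀ i, Y i ⊆ Y' i) → ∀ i, Y' i = Y i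

section Helpers
variable {E : Type*} [NormedAddCommGroup E] [InnerProductSpace ℝ E]

lemma inner_sub_of_dist_eq {a b p : E} (h : ‖a - p‖ = ‖b - p‖) :
    ⟪a - b, p⟫ = (‖a‖ ^ 2 - ‖b‖ ^ 2) / 2 := by
  have h2 : ‖a - p‖ ^ 2 = ‖b - p‖ ^ 2 := by rw [h]
  rw [norm_sub_sq_real, norm_sub_sq_real] at h2
  rw [inner_sub_left]
  linarith

lemma inner_const_on_affineSpan_s8 {v : E} {s : Set E} {k : ℝ}
    (h : ∀ y ∈ s, ⟪v, y⟫ = k) {p : E} (hp : p ∈ affineSpan ℝ s) : ⟪v, p⟫ = k := by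
  refine affineSpan_induction (p := fun x => ⟪v, x⟫ = k) hp h ?_
  intro t u w x hu hw hx
  simp only [vsub_eq_sub, vadd_eq_add, inner_add_right, inner_smul_right, inner_sub_right,
    hu, hw, hx]
  ring

end Helpers

set_option maxHeartbeats 1600000 in
/-- For a maximal equidistant spacing, each center lies in the affine hull of
the remaining centers. -/
theorem center_in_affine_hull_of_others {n I : ℕ} (hI : 2 ≤ I)
    (Y : Fin I → Set (EuclideanSpace ℝ (Fin n)))
    (hne : ∀ i, (Y i).Nonempty) (hmax : IsMaximalEquidistant Y)
    (c : Fin I → EuclideanSpace ℝ (Fin n)) (r : Fin I → ℝ)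
    (hc : ∀ i, c i ∈ affineSpan ℝ (Y i))
    (hr : ∀ i, ∀ y ∈ Y i, ‖y - c i‖ = r i) :
    ∀ i₀ : Fin I, c i₀ ∈ affineSpan ℝ (c '' {i | i ≠ i₀}) := by
  intro i₀
  classical
  have hEq : IsEquidistant Y := hmax.1
  obtain ⟨j₀, hj₀⟩ : ∃ j : Fin I, j ≠ i₀ :=
    Fintype.exists_ne_of_one_lt_card (by simpa using (show 1 < I by omega)) i₀
  obtain ⟨x₀, hx₀⟩ := hne i₀
  obtain ⟨y₀, hy₀⟩ := hne j₀
  -- the union of the other classes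
  set U : Set (EuclideanSpace ℝ (Fin n)) := {y | ∃ j, j ≠ i₀ ∧ y ∈ Y j} with hU
  have hy₀U : y₀ ∈ U := ⟨j₀, hj₀, hy₀⟩
  set W : Submodule ℝ (EuclideanSpace ℝ (Fin n)) := vectorSpan ℝ U with hW
  have hUdiff : ∀ y ∈ U, ∀ y' ∈ U, y - y' ∈ W := by
    intro y hy y' hy'
    simpa [vsub_eq_sub] using vsub_mem_vectorSpan ℝ hy hy'
  -- key inner product lemma
  have KL : ∀ (m j : Fin I), ∀ a ∈ Y m, ∀ b ∈ Y m,
      ⟪a - b, c j⟫ = (‖a‖ ^ 2 - ‖b‖ ^ 2) / 2 := by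
    intro m j a ha b hb
    by_cases hjm : j = m
    · subst hjm
      exact inner_sub_of_dist_eq (by rw [hr j a ha, hr j b hb])
    · refine inner_const_on_affineSpan_s8 ?_ (hc j)
      intro y hy
      exact inner_sub_of_dist_eq
        (by rw [hEq m j (fun h => hjm h.symm) a ha y hy, hEq m j (fun h => hjm h.symm) b hb y hy])
  -- the solution set for class i₀
  set T : Set (EuclideanSpace ℝ (Fin n)) := {x | ∀ j, j ≠ i₀ → ∀ y ∈ Y j, ‖x - y‖ = 1} with hT
  have hYT : Y i₀ ⊆ T := by
    intro x hx j hj y hy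
    exact hEq i₀ j (fun h => hj h.symm) x hx y hy
  have hTY : T = Y i₀ := by
    have := hmax.2 (fun i => if i = i₀ then T else Y i) ?_ ?_ i₀
    · simpa using this
    · intro i j hij yi hyi yj hyj
      dsimp only at hyi hyj
      by_cases hi : i = i₀
      · subst hi
        rw [if_pos rfl] at hyi
        rw [if_neg (fun h => hij h.symm)] at hyj
        exact hyi j (fun h => hij h.symm) yj hyj
      · rw [if_neg hi] at hyi
        by_cases hj : j = i₀
        · subst hj
          rw [if_pos rfl] at hyj
          rw [norm_sub_rev]
          exact hyj i hi yi hyi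
        · rw [if_neg hj] at hyj
          exact hEq i j hij yi hyi yj hyj
    · intro i
      by_cases hi : i = i₀
      · subst hi; simpa using hYT
      · simp only [if_neg hi]; exact fun _ h => h
  -- orthogonal decomposition of x₀ - y₀
  obtain ⟨zW, hzWW, zO, hzOW, hx₀eq⟩ :
      ∃ zW ∈ W, ∃ zO ∈ Wᗮ, x₀ = y₀ + zW + zO :=
    ⟨(Submodule.orthogonalProjectionOnto W (x₀ - y₀) : EuclideanSpace ℝ (Fin n)),
      (Submodule.orthogonalProjectionOnto W (x₀ - y₀)).2,
      (x₀ - y₀) - (Submodule.orthogonalProjectionOnto W (x₀ - y₀) : EuclideanSpace ℝ (Fin n)),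
      Submodule.sub_starProjection_mem_orthogonal (K := W) (x₀ - y₀), by abel⟩
  -- points of the sphere belong to T
  have hmemT : ∀ w : EuclideanSpace ℝ (Fin n), w ∈ Wᗮ → ‖w‖ = ‖zO‖ → y₀ + zW + w ∈ T := by
    intro w hw hnw j hj y hy
    have hyU : y ∈ U := ⟨j, hj, hy⟩
    have hA : (y₀ - y) + zW ∈ W := W.add_mem (hUdiff y₀ hy₀U y hyU) hzWW
    have h1 : ‖x₀ - y‖ = 1 := hEq i₀ j (fun h => hj h.symm) x₀ hx₀ y hy
    have e1 : y₀ + zW + w - y = ((y₀ - y) + zW) + w := by abel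
    have e2 : x₀ - y = ((y₀ - y) + zW) + zO := by rw [hx₀eq]; abel
    have n1 : ‖((y₀ - y) + zW) + w‖ ^ 2 = ‖(y₀ - y) + zW‖ ^ 2 + ‖w‖ ^ 2 := by
      rw [norm_add_sq_real, Submodule.inner_right_of_mem_orthogonal hA hw]; ring
    have n2 : ‖((y₀ - y) + zW) + zO‖ ^ 2 = ‖(y₀ - y) + zW‖ ^ 2 + ‖zO‖ ^ 2 := by
      rw [norm_add_sq_real, Submodule.inner_right_of_mem_orthogonal hA hzOW]; ring
    have hsq : ‖y₀ + zW + w - y‖ ^ 2 = 1 := by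
      rw [e1, n1, hnw, ← n2, ← e2, h1]; norm_num
    nlinarith [norm_nonneg (y₀ + zW + w - y), hsq]
  -- main orthogonality
  have hkey : ∀ u ∈ Wᗮ, ⟪u, c i₀ - y₀⟫ = 0 := by
    by_cases hz : zO = 0
    · -- degenerate case : Y i₀ = {x₀}
      have hxT : x₀ ∈ T := hYT hx₀
      have hsub : ∀ x ∈ T, x = x₀ := by
        intro x hx
        have hxW : ∀ v ∈ W, ⟪v, x - x₀⟫ = 0 := by
          intro v hv
          rw [hW, vectorSpan_def] at hv
          induction hv using Submodule.span_induction with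
          | mem p hp =>
            obtain ⟨a, ha, b, hb, rfl⟩ := hp
            obtain ⟨ja, hja, ha'⟩ := ha
            obtain ⟨jb, hjb, hb'⟩ := hb
            have h1 : ⟪a - b, x⟫ = (‖a‖ ^ 2 - ‖b‖ ^ 2) / 2 := inner_sub_of_dist_eq (by
              rw [norm_sub_rev a x, norm_sub_rev b x, hx ja hja a ha', hx jb hjb b hb'])
            have h2 : ⟪a - b, x₀⟫ = (‖a‖ ^ 2 - ‖b‖ ^ 2) / 2 := inner_sub_of_dist_eq (by
              rw [norm_sub_rev a x₀, norm_sub_rev b x₀, hxT ja hja a ha', hxT jb hjb b hb'])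
            simp only [vsub_eq_sub]
            rw [inner_sub_right, h1, h2]; ring
          | zero => simp
          | add p q hp hq ihp ihq => rw [inner_add_left, ihp, ihq]; ring
          | smul t p hp ih => rw [real_inner_smul_left, ih]; ring
        have hxOrth : x - x₀ ∈ Wᗮ := (Submodule.mem_orthogonal W _).2 hxW
        have h1 : ‖x - y₀‖ = 1 := hx j₀ hj₀ y₀ hy₀
        have e : x - y₀ = (x - x₀) + zW := by rw [hx₀eq, hz]; abel
        have hzWn : ‖zW‖ = 1 := by
          have h2 : ‖x₀ - y₀‖ = 1 := hEq i₀ j₀ (Ne.symm hj₀) x₀ hx₀ y₀ hy₀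
          have e2 : x₀ - y₀ = zW := by rw [hx₀eq, hz]; abel
          rwa [e2] at h2
        have n1 : ‖x - y₀‖ ^ 2 = ‖x - x₀‖ ^ 2 + ‖zW‖ ^ 2 := by
          rw [e, norm_add_sq_real, Submodule.inner_left_of_mem_orthogonal hzWW hxOrth]; ring
        have : ‖x - x₀‖ ^ 2 = 0 := by rw [h1, hzWn] at n1; nlinarith [n1]
        have : x - x₀ = 0 := by
          rwa [pow_eq_zero_iff (by norm_num), norm_eq_zero] at this
        exact sub_eq_zero.1 this
      have hcx : c i₀ = x₀ := by
        have hYx : Y i₀ = {x₀} :=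
          Set.eq_singleton_iff_unique_mem.2 ⟨hx₀, fun x hx => hsub x (hYT hx)⟩
        have hmem := hc i₀
        rw [hYx] at hmem
        exact (AffineSubspace.mem_affineSpan_singleton ℝ _).1 hmem
      intro u hu
      have hcy : c i₀ - y₀ = zW := by rw [hcx, hx₀eq, hz]; abel
      rw [hcy]
      exact Submodule.inner_left_of_mem_orthogonal hzWW hu
    · intro u hu
      by_cases hu0 : u = 0
      · simp [hu0]
      have hzOn : ‖zO‖ ≠ 0 := fun h => hz (norm_eq_zero.1 h)
      have hun : ‖u‖ ≠ 0 := fun h => hu0 (norm_eq_zero.1 h)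
      set t : ℝ := ‖zO‖ / ‖u‖ with ht
      have ht0 : t ≠ 0 := div_ne_zero hzOn hun
      have htpos : 0 ≤ t := div_nonneg (norm_nonneg _) (norm_nonneg _)
      have hwW : t • u ∈ Wᗮ := Submodule.smul_mem _ t hu
      have hwn : ‖t • u‖ = ‖zO‖ := by
        rw [norm_smul, Real.norm_eq_abs, abs_of_nonneg htpos, ht, div_mul_cancel₀ _ hun]
      have hp1 : y₀ + zW + t • u ∈ Y i₀ := by
        rw [← hTY]; exact hmemT _ hwW hwn
      have hp2 : y₀ + zW + (-(t • u)) ∈ Y i₀ := by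
        rw [← hTY]; exact hmemT _ (Submodule.neg_mem _ hwW) (by rw [norm_neg]; exact hwn)
      have hd : ‖(y₀ + zW + t • u) - c i₀‖ = ‖(y₀ + zW + (-(t • u))) - c i₀‖ := by
        rw [hr i₀ _ hp1, hr i₀ _ hp2]
      have h3 := inner_sub_of_dist_eq hd
      have e1 : (y₀ + zW + t • u) - (y₀ + zW + (-(t • u))) = (2 * t) • u := by
        rw [two_mul, add_smul]; abel
      have e2 : ‖y₀ + zW + t • u‖ ^ 2
          = ‖y₀ + zW‖ ^ 2 + 2 * ⟪y₀ + zW, t • u⟫ + ‖t • u‖ ^ 2 := norm_add_sq_real _ _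
      have e3 : ‖y₀ + zW + (-(t • u))‖ ^ 2
          = ‖y₀ + zW‖ ^ 2 - 2 * ⟪y₀ + zW, t • u⟫ + ‖t • u‖ ^ 2 := by
        have e : y₀ + zW + (-(t • u)) = (y₀ + zW) - t • u := by abel
        rw [e, norm_sub_sq_real]
      rw [e1, e2, e3, real_inner_smul_left] at h3
      have h4 : ⟪y₀ + zW, t • u⟫ = t * ⟪u, y₀ + zW⟫ := by
        rw [real_inner_smul_right, real_inner_comm]
      rw [h4] at h3
      have h5 : ⟪u, c i₀⟫ = ⟪u, y₀ + zW⟫ := by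
        have h6 : t * ⟪u, c i₀⟫ = t * ⟪u, y₀ + zW⟫ := by linarith
        exact mul_left_cancel₀ ht0 h6
      have h6 : ⟪u, zW⟫ = 0 := Submodule.inner_left_of_mem_orthogonal hzWW hu
      rw [inner_sub_right, h5, inner_add_right, h6]
      ring
  have hciW : c i₀ - y₀ ∈ W := by
    rw [← Submodule.orthogonal_orthogonal W]
    exact (Submodule.mem_orthogonal Wᗮ _).2 hkey
  have hcjW : c j₀ - y₀ ∈ W := by
    have h1 : c j₀ -ᵥ y₀ ∈ (affineSpan ℝ (Y j₀)).direction :=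
      AffineSubspace.vsub_mem_direction (hc j₀) (subset_affineSpan ℝ _ hy₀)
    rw [direction_affineSpan] at h1
    have h2 : vectorSpan ℝ (Y j₀) ≤ W := vectorSpan_mono ℝ (fun y hy => ⟨j₀, hj₀, hy⟩)
    simpa [vsub_eq_sub] using h2 h1
  have hccW : c i₀ - c j₀ ∈ W := by
    have : c i₀ - c j₀ = (c i₀ - y₀) - (c j₀ - y₀) := by abel
    rw [this]; exact W.sub_mem hciW hcjW
  -- the span of all centers
  set L : Submodule ℝ (EuclideanSpace ℝ (Fin n)) := vectorSpan ℝ (Set.range c) with hL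
  have hLinner : ∀ v ∈ L, ∀ (m : Fin I), ∀ a ∈ Y m, ∀ b ∈ Y m, ⟪v, a - b⟫ = 0 := by
    intro v hv
    rw [hL, vectorSpan_def] at hv
    induction hv using Submodule.span_induction with
    | mem x hx =>
      rintro m a ha b hb
      obtain ⟨p, ⟨j, rfl⟩, q, ⟨k, rfl⟩, rfl⟩ := hx
      have h1 := KL m j a ha b hb
      have h2 := KL m k a ha b hb
      have : ⟪a - b, c j -ᵥ c k⟫ = 0 := by
        rw [vsub_eq_sub, inner_sub_right, h1, h2]; ring
      rw [real_inner_comm] at this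
      exact this
    | zero => intro m a ha b hb; simp
    | add x y hx hy ihx ihy => intro m a ha b hb; rw [inner_add_left, ihx m a ha b hb, ihy m a ha b hb]; ring
    | smul t x hx ih => intro m a ha b hb; rw [real_inner_smul_left, ih m a ha b hb]; ring
  set D : Submodule ℝ (EuclideanSpace ℝ (Fin n)) := vectorSpan ℝ (c '' {i | i ≠ i₀}) with hD
  set Vall : Submodule ℝ (EuclideanSpace ℝ (Fin n)) := ⨆ m : Fin I, vectorSpan ℝ (Y m) with hVall
  have hWle : W ≤ D ⊔ Vall := by
    rw [hW, vectorSpan_def]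
    apply Submodule.span_le.2
    rintro p ⟨a, ha, b, hb, rfl⟩
    obtain ⟨j, hj, ha'⟩ := ha
    obtain ⟨k, hk, hb'⟩ := hb
    have h1 : a - c j ∈ vectorSpan ℝ (Y j) := by
      have := AffineSubspace.vsub_mem_direction (subset_affineSpan ℝ _ ha') (hc j)
      rwa [direction_affineSpan, vsub_eq_sub] at this
    have h2 : c k - b ∈ vectorSpan ℝ (Y k) := by
      have := AffineSubspace.vsub_mem_direction (hc k) (subset_affineSpan ℝ _ hb')
      rwa [direction_affineSpan, vsub_eq_sub] at this
    have h3 : c j - c k ∈ D := by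
      rw [hD]
      simpa [vsub_eq_sub] using
        vsub_mem_vectorSpan ℝ (Set.mem_image_of_mem c hj) (Set.mem_image_of_mem c hk)
    simp only [SetLike.mem_coe, vsub_eq_sub]
    have he : a - b = (a - c j) + ((c j - c k) + (c k - b)) := by abel
    rw [he]
    refine Submodule.add_mem _ ?_ (Submodule.add_mem _ ?_ ?_)
    · exact Submodule.mem_sup_right (Submodule.mem_iSup_of_mem j h1)
    · exact Submodule.mem_sup_left h3
    · exact Submodule.mem_sup_right (Submodule.mem_iSup_of_mem k h2)
  have hVle : Vall ≤ Lᗮ := by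
    rw [hVall]
    refine iSup_le fun m => ?_
    rw [vectorSpan_def]
    apply Submodule.span_le.2
    rintro p ⟨a, ha, b, hb, rfl⟩
    rw [SetLike.mem_coe]
    refine (Submodule.mem_orthogonal L _).2 fun v hv => ?_
    simp only [vsub_eq_sub]
    exact hLinner v hv m a ha b hb
  have hccL : c i₀ - c j₀ ∈ L := by
    rw [hL]
    exact
      vsub_mem_vectorSpan ℝ (Set.mem_range_self i₀) (Set.mem_range_self j₀)
  obtain ⟨d, hd, v, hv, hdv⟩ := Submodule.mem_sup.1 (hWle hccW)
  have hdL : d ∈ L := by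
    have hDL : D ≤ L := by
      rw [hD, hL]; exact vectorSpan_mono ℝ (Set.image_subset_range c _)
    exact hDL hd
  have hv0 : v = 0 := by
    have h1 : ⟪c i₀ - c j₀, v⟫ = 0 :=
      Submodule.inner_right_of_mem_orthogonal hccL (hVle hv)
    have h2 : ⟪d, v⟫ = 0 := Submodule.inner_right_of_mem_orthogonal hdL (hVle hv)
    have h3 : ⟪v, v⟫ = (0 : ℝ) := by
      have h4 : (⟪d, v⟫ : ℝ) + ⟪v, v⟫ = ⟪c i₀ - c j₀, v⟫ := by rw [← inner_add_left, hdv]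
      linarith
    exact inner_self_eq_zero.1 h3
  have hccD : c i₀ - c j₀ ∈ D := by
    have : c i₀ - c j₀ = d := by rw [← hdv, hv0, add_zero]
    rw [this]; exact hd
  have hj₀mem : c j₀ ∈ affineSpan ℝ (c '' {i | i ≠ i₀}) :=
    subset_affineSpan ℝ _ ⟨j₀, hj₀, rfl⟩
  refine (AffineSubspace.vsub_right_mem_direction_iff_mem hj₀mem (c i₀)).1 ?_
  rw [direction_affineSpan, vsub_eq_sub]
  exact hccD
end

section
/- Let Y₁, ..., Y_I ⊂ ℝⁿ be a maximal equidistant spacing with centers c₁, ..., c_I. If two of the centers coincide (c_i = c_j for some i ≠ j), then all centers coincide: c₁ = c₂ = ... = c_I. -/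
open RealInnerProductSpace

section AuxLemmas

variable {n I : ℕ}

lemma inner_const_of_mem_affineSpan {s : Set (EuclideanSpace ℝ (Fin n))}
    {v p : EuclideanSpace ℝ (Fin n)} {t : ℝ}
    (hp : p ∈ affineSpan ℝ s) (h : ∀ y ∈ s, ⟪v, y⟫ = t) : ⟪v, p⟫ = t := by
  refine affineSpan_induction (p := fun x => ⟪v, x⟫ = t) hp h ?_
  intro a u w x hu hw hx
  simp only [vsub_eq_sub, vadd_eq_add, inner_add_right, inner_smul_right,
    inner_sub_right, hu, hw, hx]
  ring

variable {Y : Fin I → Set (EuclideanSpace ℝ (Fin n))}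
  {c : Fin I → EuclideanSpace ℝ (Fin n)} {r : Fin I → ℝ}

/-- distance from the center of class `i` to any point of another class. -/
lemma eqsp_step1 (heq : IsEquidistant Y) (hc : ∀ i, c i ∈ affineSpan ℝ (Y i))
    (hr : ∀ i, ∀ y ∈ Y i, ‖y - c i‖ = r i) :
    ∀ i m : Fin I, i ≠ m → ∀ ym ∈ Y m, ‖c i - ym‖ ^ 2 = 1 - r i ^ 2 := by
  intro i m him ym hym
  have hconst : ∀ y ∈ Y i, ⟪ym - c i, y⟫ = (‖ym‖ ^ 2 - ‖c i‖ ^ 2 - 1 + r i ^ 2) / 2 := by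
    intro y hy
    have h1 : ‖y - ym‖ ^ 2 = 1 := by rw [heq i m him y hy ym hym]; norm_num
    have h2 : ‖y - c i‖ ^ 2 = r i ^ 2 := by rw [hr i y hy]
    rw [norm_sub_sq_real] at h1 h2
    have e : ⟪ym - c i, y⟫ = ⟪y, ym⟫ - ⟪y, c i⟫ := by
      rw [inner_sub_left, real_inner_comm ym y, real_inner_comm (c i) y]
    linarith
  have hcc := inner_const_of_mem_affineSpan (hc i) hconst
  have e : ⟪ym - c i, c i⟫ = ⟪c i, ym⟫ - ‖c i‖ ^ 2 := by
    rw [inner_sub_left, real_inner_comm ym (c i), real_inner_self_eq_norm_sq]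
  rw [norm_sub_sq_real]
  linarith

/-- distance between centers. -/
lemma eqsp_step2 (heq : IsEquidistant Y) (hc : ∀ i, c i ∈ affineSpan ℝ (Y i))
    (hr : ∀ i, ∀ y ∈ Y i, ‖y - c i‖ = r i) :
    ∀ i m : Fin I, i ≠ m → ‖c i - c m‖ ^ 2 = 1 - r i ^ 2 - r m ^ 2 := by
  intro i m him
  have hconst : ∀ y ∈ Y m, ⟪c i - c m, y⟫ =
      (‖c i‖ ^ 2 - ‖c m‖ ^ 2 - (1 - r i ^ 2) + r m ^ 2) / 2 := by
    intro y hy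
    have h1 : ‖c i - y‖ ^ 2 = 1 - r i ^ 2 := eqsp_step1 heq hc hr i m him y hy
    have h2 : ‖y - c m‖ ^ 2 = r m ^ 2 := by rw [hr m y hy]
    rw [norm_sub_sq_real] at h1 h2
    have e : ⟪c i - c m, y⟫ = ⟪c i, y⟫ - ⟪y, c m⟫ := by
      rw [inner_sub_left, real_inner_comm (c m) y]
    linarith
  have hcc := inner_const_of_mem_affineSpan (hc m) hconst
  have e : ⟪c i - c m, c m⟫ = ⟪c i, c m⟫ - ‖c m‖ ^ 2 := by
    rw [inner_sub_left, real_inner_self_eq_norm_sq]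
  rw [norm_sub_sq_real]
  linarith

/-- center differences are orthogonal to class directions. -/
lemma eqsp_step3 (heq : IsEquidistant Y) (hc : ∀ i, c i ∈ affineSpan ℝ (Y i))
    (hr : ∀ i, ∀ y ∈ Y i, ‖y - c i‖ = r i) :
    ∀ i m : Fin I, i ≠ m → ∀ ym ∈ Y m, ⟪c i - c m, ym - c m⟫ = 0 := by
  intro i m him ym hym
  have h1 : ‖c i - ym‖ ^ 2 = 1 - r i ^ 2 := eqsp_step1 heq hc hr i m him ym hym
  have h2 : ‖c i - c m‖ ^ 2 = 1 - r i ^ 2 - r m ^ 2 := eqsp_step2 heq hc hr i m him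
  have h3 : ‖ym - c m‖ ^ 2 = r m ^ 2 := by rw [hr m ym hym]
  have e : ‖c i - ym‖ ^ 2 =
      ‖c i - c m‖ ^ 2 - 2 * ⟪c i - c m, ym - c m⟫ + ‖ym - c m‖ ^ 2 := by
    rw [← norm_sub_sq_real, sub_sub_sub_cancel_right]
  linarith

/-- directions of distinct classes are mutually orthogonal. -/
lemma eqsp_step4 (heq : IsEquidistant Y) (hc : ∀ i, c i ∈ affineSpan ℝ (Y i))
    (hr : ∀ i, ∀ y ∈ Y i, ‖y - c i‖ = r i) :
    ∀ k m : Fin I, k ≠ m → ∀ yk ∈ Y k, ∀ ym ∈ Y m, ⟪yk - c k, ym - c m⟫ = 0 := by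
  intro k m hkm yk hyk ym hym
  have e1 : ⟪yk - c k, ym - c m⟫ = ⟪yk - c m, ym - c m⟫ - ⟪c k - c m, ym - c m⟫ := by
    rw [← inner_sub_left, sub_sub_sub_cancel_right]
  have h2 : ⟪c k - c m, ym - c m⟫ = 0 := eqsp_step3 heq hc hr k m hkm ym hym
  have h3 : ‖yk - c m‖ ^ 2 = 1 - r m ^ 2 := by
    rw [norm_sub_rev]
    exact eqsp_step1 heq hc hr m k (Ne.symm hkm) yk hyk
  have h4 : ‖ym - c m‖ ^ 2 = r m ^ 2 := by rw [hr m ym hym]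
  have h5 : ‖yk - ym‖ ^ 2 = 1 := by rw [heq k m hkm yk hyk ym hym]; norm_num
  have e2 : ‖yk - ym‖ ^ 2 =
      ‖yk - c m‖ ^ 2 - 2 * ⟪yk - c m, ym - c m⟫ + ‖ym - c m‖ ^ 2 := by
    rw [← norm_sub_sq_real, sub_sub_sub_cancel_right]
  linarith

/-- the key lemma: if two centers coincide, any third center equals them. -/
lemma eqsp_key (hmax : IsMaximalEquidistant Y) (hne : ∀ i, (Y i).Nonempty)
    (hc : ∀ i, c i ∈ affineSpan ℝ (Y i))
    (hr : ∀ i, ∀ y ∈ Y i, ‖y - c i‖ = r i)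
    {i0 j0 k : Fin I} (hij : i0 ≠ j0) (hcc : c i0 = c j0)
    (hki : k ≠ i0) (hkj : k ≠ j0) : c k = c i0 := by
  obtain ⟨heq, hmx⟩ := hmax
  obtain ⟨yk, hyk⟩ := hne k
  have h0 : (1 : ℝ) - r i0 ^ 2 - r j0 ^ 2 = 0 := by
    have h := eqsp_step2 heq hc hr i0 j0 hij
    rw [hcc, sub_self] at h
    simpa using h.symm
  have hrr : r i0 ^ 2 = r j0 ^ 2 := by
    have a := eqsp_step2 heq hc hr i0 k (Ne.symm hki)
    have b := eqsp_step2 heq hc hr j0 k (Ne.symm hkj)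
    rw [hcc] at a
    linarith
  have hhalf : r i0 ^ 2 = 1 / 2 := by linarith
  set p : EuclideanSpace ℝ (Fin n) := c i0 + (c i0 - yk) with hpdef
  have hp1 : ∀ m : Fin I, m ≠ k → ∀ ym ∈ Y m, ‖p - ym‖ = 1 := by
    intro m hmk ym hym
    have hvec : p - ym = (c i0 - yk) + (c i0 - ym) := by rw [hpdef]; abel
    have hA : ‖c i0 - yk‖ ^ 2 = 1 - r i0 ^ 2 :=
      eqsp_step1 heq hc hr i0 k (Ne.symm hki) yk hyk
    have hT : ⟪c i0 - yk, c i0 - ym⟫ = 0 := by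
      have hnn : ⟪c i0 - yk, c i0 - ym⟫ = ⟪yk - c i0, ym - c i0⟫ := by
        rw [← neg_sub yk (c i0), ← neg_sub ym (c i0), inner_neg_neg]
      rw [hnn]
      have d1 : yk - c i0 = (yk - c k) + (c k - c i0) := by abel
      have d2 : ym - c i0 = (ym - c m) + (c m - c i0) := by abel
      have T1 : ⟪yk - c k, ym - c m⟫ = 0 :=
        eqsp_step4 heq hc hr k m (Ne.symm hmk) yk hyk ym hym
      have T2 : ⟪yk - c k, c m - c i0⟫ = 0 := by
        have d3 : c m - c i0 = (c m - c k) - (c i0 - c k) :=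
          (sub_sub_sub_cancel_right _ _ _).symm
        have w1 : ⟪yk - c k, c m - c k⟫ = 0 := by
          rw [real_inner_comm]; exact eqsp_step3 heq hc hr m k hmk yk hyk
        have w2 : ⟪yk - c k, c i0 - c k⟫ = 0 := by
          rw [real_inner_comm]; exact eqsp_step3 heq hc hr i0 k (Ne.symm hki) yk hyk
        rw [d3, inner_sub_right, w1, w2, sub_zero]
      have T3 : ⟪c k - c i0, ym - c m⟫ = 0 := by
        have d4 : c k - c i0 = (c k - c m) - (c i0 - c m) :=
          (sub_sub_sub_cancel_right _ _ _).symm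
        have v1 : ⟪c k - c m, ym - c m⟫ = 0 :=
          eqsp_step3 heq hc hr k m (Ne.symm hmk) ym hym
        have v2 : ⟪c i0 - c m, ym - c m⟫ = 0 := by
          by_cases hmi : m = i0
          · simp [hmi]
          · by_cases hmj : m = j0
            · simp [hmj, hcc]
            · exact eqsp_step3 heq hc hr i0 m (Ne.symm hmi) ym hym
        rw [d4, inner_sub_left, v1, v2, sub_zero]
      have T4 : ⟪c k - c i0, c m - c i0⟫ = 0 := by
        by_cases hmi : m = i0
        · simp [hmi]
        · by_cases hmj : m = j0
          · simp [hmj, hcc]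
          · have a := eqsp_step2 heq hc hr k i0 hki
            have b := eqsp_step2 heq hc hr m i0 hmi
            have d := eqsp_step2 heq hc hr k m (Ne.symm hmk)
            have e : ‖c k - c m‖ ^ 2 = ‖c k - c i0‖ ^ 2 -
                2 * ⟪c k - c i0, c m - c i0⟫ + ‖c m - c i0‖ ^ 2 := by
              rw [← norm_sub_sq_real, sub_sub_sub_cancel_right]
            linarith
      rw [d1, d2, inner_add_left, inner_add_right, inner_add_right]
      linarith
    have hsq : ‖p - ym‖ ^ 2 = 1 := by
      rw [hvec, norm_add_sq_real, hT]
      by_cases hmi : m = i0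
      · have hB : ‖c i0 - ym‖ ^ 2 = r i0 ^ 2 := by
          rw [norm_sub_rev, hr i0 ym (hmi ▸ hym)]
        linarith
      · by_cases hmj : m = j0
        · have hB : ‖c i0 - ym‖ ^ 2 = r j0 ^ 2 := by
            rw [hcc, norm_sub_rev, hr j0 ym (hmj ▸ hym)]
          linarith
        · have hB : ‖c i0 - ym‖ ^ 2 = 1 - r i0 ^ 2 :=
            eqsp_step1 heq hc hr i0 m (Ne.symm hmi) ym hym
          linarith
    have hpos : (0 : ℝ) ≤ ‖p - ym‖ := norm_nonneg _
    nlinarith [hsq, hpos, sq_nonneg (‖p - ym‖ - 1), sq_nonneg (‖p - ym‖ + 1)]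
  classical
  set Y' : Fin I → Set (EuclideanSpace ℝ (Fin n)) :=
    fun l => if l = k then insert p (Y k) else Y l with hY'
  have hY'eq : IsEquidistant Y' := by
    intro a b hab ya hya yb hyb
    simp only [hY'] at hya hyb
    by_cases h1 : a = k <;> by_cases h2 : b = k
    · exact absurd (h1.trans h2.symm) hab
    · rw [if_pos h1] at hya; rw [if_neg h2] at hyb
      rcases Set.mem_insert_iff.mp hya with rfl | hya'
      · exact hp1 b h2 yb hyb
      · exact heq a b hab ya (by rw [h1]; exact hya') yb hyb
    · rw [if_neg h1] at hya; rw [if_pos h2] at hyb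
      rcases Set.mem_insert_iff.mp hyb with rfl | hyb'
      · rw [norm_sub_rev]; exact hp1 a h1 ya hya
      · exact heq a b hab ya hya yb (by rw [h2]; exact hyb')
    · rw [if_neg h1] at hya; rw [if_neg h2] at hyb
      exact heq a b hab ya hya yb hyb
  have hsub : ∀ l, Y l ⊆ Y' l := by
    intro l x hx
    by_cases hl : l = k
    · subst hl
      simp only [hY', if_pos rfl]
      exact Set.mem_insert_of_mem _ hx
    · simp only [hY', if_neg hl]
      exact hx
  have hpk : p ∈ Y k := by
    have h := hmx Y' hY'eq hsub k
    have hmem : p ∈ Y' k := by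
      simp only [hY', if_pos rfl]
      exact Set.mem_insert _ _
    rwa [h] at hmem
  have hpc : ‖p - c k‖ ^ 2 = r k ^ 2 := by rw [hr k p hpk]
  have hv : p - c k = (c i0 - yk) + (c i0 - c k) := by rw [hpdef]; abel
  have hB : ‖c i0 - c k‖ ^ 2 = 1 - r i0 ^ 2 - r k ^ 2 :=
    eqsp_step2 heq hc hr i0 k (Ne.symm hki)
  have hA : ‖c i0 - yk‖ ^ 2 = 1 - r i0 ^ 2 :=
    eqsp_step1 heq hc hr i0 k (Ne.symm hki) yk hyk
  have hT : ⟪c i0 - yk, c i0 - c k⟫ = ‖c i0 - c k‖ ^ 2 := by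
    have hnn : ⟪c i0 - yk, c i0 - c k⟫ = ⟪yk - c i0, c k - c i0⟫ := by
      rw [← neg_sub yk (c i0), ← neg_sub (c k) (c i0), inner_neg_neg]
    rw [hnn]
    have d1 : yk - c i0 = (yk - c k) + (c k - c i0) := by abel
    rw [d1, inner_add_left]
    have u1 : ⟪yk - c k, c k - c i0⟫ = 0 := by
      have s3 := eqsp_step3 heq hc hr i0 k (Ne.symm hki) yk hyk
      rw [← neg_sub (c i0) (c k), inner_neg_right, real_inner_comm, s3, neg_zero]
    rw [u1, real_inner_self_eq_norm_sq, zero_add, norm_sub_rev]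
  rw [hv, norm_add_sq_real, hT, hA, hB] at hpc
  have hnorm0 : ‖c i0 - c k‖ ^ 2 = 0 := by rw [hB]; linarith
  have h9 : ‖c i0 - c k‖ = 0 := by
    nlinarith [norm_nonneg (c i0 - c k)]
  exact (sub_eq_zero.mp (norm_eq_zero.mp h9)).symm

end AuxLemmas

/-- If two centers of a maximal equidistant spacing coincide, then all centers
coincide. -/
theorem two_centers_coincide_implies_all {n I : ℕ} (hI : 2 ≤ I)
    (Y : Fin I → Set (EuclideanSpace ℝ (Fin n)))
    (hne : ∀ i, (Y i).Nonempty) (hmax : IsMaximalEquidistant Y)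
    (c : Fin I → EuclideanSpace ℝ (Fin n)) (r : Fin I → ℝ)
    (hc : ∀ i, c i ∈ affineSpan ℝ (Y i))
    (hr : ∀ i, ∀ y ∈ Y i, ‖y - c i‖ = r i)
    (hcoin : ∃ i j : Fin I, i ≠ j ∧ c i = c j) :
    ∀ i j : Fin I, c i = c j := by
  obtain ⟨i0, j0, hij, hcc⟩ := hcoin
  have key : ∀ k, c k = c i0 := by
    intro k
    by_cases hki : k = i0
    · rw [hki]
    · by_cases hkj : k = j0
      · rw [hkj]; exact hcc.symm
      · exact eqsp_key hmax hne hc hr hij hcc hki hkj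
  intro a b
  rw [key a, key b]
end

section
/- Let Y₁, ..., Y_I ⊂ ℝⁿ be a maximal equidistant spacing whose centers c₁, ..., c_I do not all coincide. Then c₁, ..., c_I form an orthocentric system: for each i, the points c_j (j ≠ i) are affinely independent and c_i is the orthocenter of the simplex they span. -/
open RealInnerProductSpace

private lemma aux_polar {V : Type*} [NormedAddCommGroup V] [InnerProductSpace ℝ V]
    (a b cc d : V) :
    2 * ⟪a - b, cc - d⟫ = ‖a - d‖^2 + ‖b - cc‖^2 - ‖a - cc‖^2 - ‖b - d‖^2 := by
  simp only [norm_sub_sq_real, inner_sub_left, inner_sub_right]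
  ring

private lemma aux_extend {V : Type*} [NormedAddCommGroup V] [InnerProductSpace ℝ V]
    {s : Set V} {v : V} {t : ℝ} (h : ∀ y ∈ s, ⟪y, v⟫ = t)
    {x : V} (hx : x ∈ affineSpan ℝ s) : ⟪x, v⟫ = t := by
  refine affineSpan_induction (p := fun z => ⟪z, v⟫ = t) hx h ?_
  intro a u u' w hu hu' hw
  simp only [vsub_eq_sub, vadd_eq_add]
  rw [inner_add_left, real_inner_smul_left, inner_sub_left, hu, hu', hw]
  ring

private lemma aux_inner_const {V : Type*} [NormedAddCommGroup V] [InnerProductSpace ℝ V]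
    {a b b' : V} (h : ‖a - b‖ = ‖a - b'‖) :
    ⟪a, b - b'⟫ = (‖b‖^2 - ‖b'‖^2)/2 := by
  have h2 : ‖a - b‖^2 = ‖a - b'‖^2 := by rw [h]
  rw [norm_sub_sq_real, norm_sub_sq_real] at h2
  rw [inner_sub_right]
  linarith

private lemma aux_norm_one {V : Type*} [NormedAddCommGroup V] {v : V}
    (h : ‖v‖^2 = 1) : ‖v‖ = 1 := by
  have h0 : (0:ℝ) ≤ ‖v‖ := norm_nonneg v
  have h1 : (‖v‖ - 1) * (‖v‖ + 1) = 0 := by linear_combination h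
  rcases mul_eq_zero.mp h1 with h2 | h2
  · linarith
  · linarith

private lemma aux_refl {n I : ℕ} (Y : Fin I → Set (EuclideanSpace ℝ (Fin n)))
    (heq : IsEquidistant Y)
    (hmaxi : ∀ Y' : Fin I → Set (EuclideanSpace ℝ (Fin n)),
      IsEquidistant Y' → (∀ i, Y i ⊆ Y' i) → ∀ i, Y' i = Y i)
    (c : Fin I → EuclideanSpace ℝ (Fin n)) (r : Fin I → ℝ)
    (hc : ∀ i, c i ∈ affineSpan ℝ (Y i))
    (hr : ∀ i, ∀ y ∈ Y i, ‖y - c i‖ = r i)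
    (F3 : ∀ i j, i ≠ j → ∀ x ∈ Y i, ‖x - c j‖^2 = 1 - r j^2)
    (k : Fin I) (hk : r k ^ 2 = 1/2) :
    ∀ m, c m = c k := by
  have hdist : ∀ m, ∀ x ∈ Y m, ‖x - c k‖^2 = 1/2 := by
    intro m x hx
    by_cases hmk : m = k
    · subst hmk; rw [hr m x hx]; exact hk
    · rw [F3 m k hmk x hx, hk]; norm_num
  have horth : ∀ m l, m ≠ l → ∀ x ∈ Y m, ∀ y ∈ Y l, ⟪x - c k, y - c k⟫ = 0 := by
    intro m l hml x hx y hy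
    have h1 : ‖x - y‖ = 1 := heq m l hml x hx y hy
    have h3 : x - y = (x - c k) - (y - c k) := by abel
    have h4 : ‖x - y‖^2 = ‖x - c k‖^2 - 2*⟪x - c k, y - c k⟫ + ‖y - c k‖^2 := by
      rw [h3, norm_sub_sq_real]
    rw [h1, hdist m x hx, hdist l y hy] at h4
    linarith
  have hrefl1 : ∀ m l, m ≠ l → ∀ x ∈ Y m, ∀ y ∈ Y l, ‖((2:ℝ)•(c k) - x) - y‖ = 1 := by
    intro m l hml x hx y hy
    have h3 : ((2:ℝ)•(c k) - x) - y = (c k - x) + (c k - y) := by module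
    have h4 : ‖((2:ℝ)•(c k) - x) - y‖^2
        = ‖c k - x‖^2 + 2*⟪c k - x, c k - y⟫ + ‖c k - y‖^2 := by
      rw [h3, norm_add_sq_real]
    have h5 : ⟪c k - x, c k - y⟫ = 0 := by
      rw [show c k - x = -(x - c k) by abel, show c k - y = -(y - c k) by abel,
        inner_neg_neg]
      exact horth m l hml x hx y hy
    have h6 : ‖c k - x‖^2 = 1/2 := by rw [norm_sub_rev]; exact hdist m x hx
    have h7 : ‖c k - y‖^2 = 1/2 := by rw [norm_sub_rev]; exact hdist l y hy
    apply aux_norm_one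
    rw [h4, h5, h6, h7]; ring
  have hYeq' : IsEquidistant (fun m => Y m ∪ (fun x => (2:ℝ)•(c k) - x) '' Y m) := by
    intro m l hml a ha b hb
    rcases ha with ha | ⟨x, hx, rfl⟩
    · rcases hb with hb | ⟨y, hy, rfl⟩
      · exact heq m l hml a ha b hb
      · rw [norm_sub_rev]; exact hrefl1 l m hml.symm y hy a ha
    · rcases hb with hb | ⟨y, hy, rfl⟩
      · exact hrefl1 m l hml x hx b hb
      · have h8 : ((2:ℝ)•(c k) - x) - ((2:ℝ)•(c k) - y) = y - x := by module
        rw [h8, norm_sub_rev]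
        exact heq m l hml x hx y hy
  have hYe := hmaxi _ hYeq' (fun m => Set.subset_union_left)
  have hreflmem : ∀ m, ∀ x ∈ Y m, (2:ℝ)•(c k) - x ∈ Y m := by
    intro m x hx
    rw [← hYe m]
    exact Or.inr ⟨x, hx, rfl⟩
  have hreflspan : ∀ m, (2:ℝ)•(c k) - c m ∈ affineSpan ℝ (Y m) := by
    intro m
    refine affineSpan_induction
      (p := fun z => (2:ℝ)•(c k) - z ∈ affineSpan ℝ (Y m)) (hc m) ?_ ?_
    · intro x hx; exact subset_affineSpan ℝ _ (hreflmem m x hx)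
    · intro a u v w hu hv hw
      have hmem := AffineSubspace.smul_vsub_vadd_mem (affineSpan ℝ (Y m)) a hu hv hw
      convert hmem using 1
      simp only [vsub_eq_sub, vadd_eq_add]
      module
  intro m
  have hq_dist : ∀ u ∈ Y m, ‖u - ((2:ℝ)•(c k) - c m)‖ = r m := by
    intro u hu
    have h1 : u - ((2:ℝ)•(c k) - c m) = -(((2:ℝ)•(c k) - u) - c m) := by module
    rw [h1, norm_neg]
    exact hr m _ (hreflmem m u hu)
  have hconst : ∀ u ∈ Y m,
      ⟪u, c m - ((2:ℝ)•(c k) - c m)⟫ = (‖c m‖^2 - ‖(2:ℝ)•(c k) - c m‖^2)/2 := by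
    intro u hu
    exact aux_inner_const (by rw [hr m u hu, hq_dist u hu])
  have h1 := aux_extend hconst (hc m)
  have h2 := aux_extend hconst (hreflspan m)
  have h3 : ⟪c m - ((2:ℝ)•(c k) - c m), c m - ((2:ℝ)•(c k) - c m)⟫ = (0:ℝ) := by
    rw [inner_sub_left, h1, h2]; ring
  have h4 : c m - ((2:ℝ)•(c k) - c m) = 0 := inner_self_eq_zero.mp h3
  have h9 : (2:ℝ)•(c m - c k) = 0 := by
    rw [show (2:ℝ)•(c m - c k) = c m - ((2:ℝ)•(c k) - c m) by module, h4]
  rcases smul_eq_zero.mp h9 with h | h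
  · norm_num at h
  · exact sub_eq_zero.mp h

/-- Centers are Orthocentric Systems: if the centers of a maximal equidistant
spacing do not all coincide, then for each `i` the remaining centers are
affinely independent and `c i` is the orthocenter of the simplex they span
(i.e. for every vertex `c j` with `j ≠ i`, the segment from `c i` to `c j` is
orthogonal to all edges of the opposite face). -/
theorem centers_are_orthocentric {n I : ℕ} (hI : 2 ≤ I)
    (Y : Fin I → Set (EuclideanSpace ℝ (Fin n)))
    (hne : ∀ i, (Y i).Nonempty) (hmax : IsMaximalEquidistant Y)
    (c : Fin I → EuclideanSpace ℝ (Fin n)) (r : Fin I → ℝ)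
    (hc : ∀ i, c i ∈ affineSpan ℝ (Y i))
    (hr : ∀ i, ∀ y ∈ Y i, ‖y - c i‖ = r i)
    (hncoin : ¬ ∀ i j : Fin I, c i = c j) :
    ∀ i : Fin I,
      AffineIndependent ℝ (fun j : {j : Fin I // j ≠ i} => c j) ∧
      ∀ j k l : Fin I, j ≠ i → k ≠ i → l ≠ i → k ≠ j → l ≠ j →
        ⟪c i - c j, c k - c l⟫ = 0 := by
  classical
  obtain ⟨heq, hmaxi⟩ := hmax
  -- Step 1: for i ≠ j, points of affineSpan (Y i) minus c j are ⊥ differences of Y j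
  have key1 : ∀ i j : Fin I, i ≠ j → ∀ u ∈ Y j, ∀ v ∈ Y j,
      ∀ x ∈ affineSpan ℝ (Y i), ⟪x - c j, u - v⟫ = 0 := by
    intro i j hij u hu v hv x hx
    have hconst : ∀ y ∈ Y i, ⟪y, u - v⟫ = (‖u‖^2 - ‖v‖^2)/2 := by
      intro y hy
      exact aux_inner_const (by rw [heq i j hij y hy u hu, heq i j hij y hy v hv])
    have hx' := aux_extend hconst hx
    have hcj : ⟪c j, u - v⟫ = (‖u‖^2 - ‖v‖^2)/2 := by
      refine aux_inner_const ?_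
      rw [norm_sub_rev, norm_sub_rev (c j) v, hr j u hu, hr j v hv]
    rw [inner_sub_left, hx', hcj, sub_self]
  -- Step 2: also ⊥ (c j - u)
  have key2 : ∀ i j : Fin I, i ≠ j → ∀ x ∈ affineSpan ℝ (Y i), ∀ u ∈ Y j,
      ⟪x - c j, c j - u⟫ = 0 := by
    intro i j hij x hx u hu
    have hconst : ∀ y ∈ Y j, ⟪y, x - c j⟫ = ⟪u, x - c j⟫ := by
      intro y hy
      have h0 := key1 i j hij y hy u hu x hx
      rw [inner_sub_right] at h0
      linarith [real_inner_comm y (x - c j), real_inner_comm u (x - c j)]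
    have h1 := aux_extend hconst (hc j)
    rw [inner_sub_right]
    linarith [real_inner_comm (c j) (x - c j), real_inner_comm u (x - c j)]
  -- Step 3
  have F3 : ∀ i j : Fin I, i ≠ j → ∀ x ∈ Y i, ‖x - c j‖^2 = 1 - r j^2 := by
    intro i j hij x hx
    obtain ⟨u, hu⟩ := hne j
    have h1 : ‖x - u‖ = 1 := heq i j hij x hx u hu
    have h2 := key2 i j hij x (subset_affineSpan ℝ _ hx) u hu
    have h3 : x - u = (x - c j) + (c j - u) := by abel
    have h4 : ‖x - u‖^2 = ‖x - c j‖^2 + 2*⟪x - c j, c j - u⟫ + ‖c j - u‖^2 := by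
      rw [h3, norm_add_sq_real]
    have h5 : ‖c j - u‖ = r j := by rw [norm_sub_rev]; exact hr j u hu
    rw [h1, h2, h5] at h4
    linarith
  -- Step 4
  have F4 : ∀ i j : Fin I, i ≠ j → ∀ x ∈ Y i, ⟪x - c i, c i - c j⟫ = 0 := by
    intro i j hij x hx
    have h := key2 j i hij.symm (c j) (hc j) x hx
    rw [show x - c i = -(c i - x) by abel, show c i - c j = -(c j - c i) by abel,
      inner_neg_neg, real_inner_comm]
    exact h
  -- distances between centers
  have D : ∀ i j : Fin I, i ≠ j → ‖c i - c j‖^2 = 1 - r i^2 - r j^2 := by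
    intro i j hij
    obtain ⟨x, hx⟩ := hne i
    have h1 := F3 i j hij x hx
    have h2 := F4 i j hij x hx
    have h3 : x - c j = (x - c i) + (c i - c j) := by abel
    have h4 : ‖x - c j‖^2 = ‖x - c i‖^2 + 2*⟪x - c i, c i - c j⟫ + ‖c i - c j‖^2 := by
      rw [h3, norm_add_sq_real]
    rw [h1, h2, hr i x hx] at h4
    linarith
  intro i
  constructor
  · rw [affineIndependent_iff_of_fintype]
    intro w hw hwv
    by_contra hcon
    push_neg at hcon
    obtain ⟨j0, hj0⟩ := hcon
    have hv : ∑ j : {j : Fin I // j ≠ i}, w j • c j.val = 0 := by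
      rw [← Finset.weightedVSub_eq_linear_combination Finset.univ hw]
      exact hwv
    have hT : ∀ q : EuclideanSpace ℝ (Fin n),
        ∑ j : {j : Fin I // j ≠ i}, w j * ‖c j.val - q‖^2
          = ∑ j : {j : Fin I // j ≠ i}, w j * ‖c j.val‖^2 := by
      intro q
      have expand : ∀ j : {j : Fin I // j ≠ i}, w j * ‖c j.val - q‖^2
          = w j * ‖c j.val‖^2 - 2 * ⟪w j • c j.val, q⟫ + w j * ‖q‖^2 := by
        intro j
        rw [norm_sub_sq_real, real_inner_smul_left]
        ring
      calc ∑ j : {j : Fin I // j ≠ i}, w j * ‖c j.val - q‖^2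
          = ∑ j : {j : Fin I // j ≠ i},
              (w j * ‖c j.val‖^2 - 2 * ⟪w j • c j.val, q⟫ + w j * ‖q‖^2) :=
            Finset.sum_congr rfl (fun j _ => expand j)
        _ = ∑ j : {j : Fin I // j ≠ i}, w j * ‖c j.val‖^2
              - 2 * ⟪∑ j : {j : Fin I // j ≠ i}, w j • c j.val, q⟫
              + (∑ j : {j : Fin I // j ≠ i}, w j) * ‖q‖^2 := by
            rw [Finset.sum_add_distrib, Finset.sum_sub_distrib, Finset.sum_mul,
              sum_inner, Finset.mul_sum]
        _ = ∑ j : {j : Fin I // j ≠ i}, w j * ‖c j.val‖^2 := by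
            rw [hv, hw, inner_zero_left]
            ring
    have hE1 : ∑ j : {j : Fin I // j ≠ i}, w j * ‖c j.val - c i‖^2
        = - ∑ j : {j : Fin I // j ≠ i}, w j * r j.val ^2 := by
      have hpt : ∀ j : {j : Fin I // j ≠ i},
          w j * ‖c j.val - c i‖^2 = w j * (1 - r i^2) - w j * r j.val^2 := by
        intro j
        rw [D j.val i j.2]
        ring
      rw [Finset.sum_congr rfl (fun j _ => hpt j), Finset.sum_sub_distrib,
        ← Finset.sum_mul, hw]
      ring
    have hE2 : ∑ j : {j : Fin I // j ≠ i}, w j * ‖c j.val - c j0.val‖^2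
        = (- ∑ j : {j : Fin I // j ≠ i}, w j * r j.val^2)
          + (2 * r j0.val^2 - 1) * w j0 := by
      have hpt : ∀ j : {j : Fin I // j ≠ i}, w j * ‖c j.val - c j0.val‖^2
          = (w j * (1 - r j0.val^2) - w j * r j.val^2)
            + (if j = j0 then (2 * r j0.val^2 - 1) * w j0 else 0) := by
        intro j
        by_cases hjj : j = j0
        · subst hjj
          rw [sub_self, norm_zero, if_pos rfl]
          ring
        · have hne2 : j.val ≠ j0.val := fun h => hjj (Subtype.ext h)
          rw [D j.val j0.val hne2, if_neg hjj]
          ring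
      rw [Finset.sum_congr rfl (fun j _ => hpt j), Finset.sum_add_distrib,
        Finset.sum_ite_eq', Finset.sum_sub_distrib, ← Finset.sum_mul, hw,
        if_pos (Finset.mem_univ j0)]
      ring
    have hfin : (2 * r j0.val^2 - 1) * w j0 = 0 := by
      have e1 := hT (c i)
      have e2 := hT (c j0.val)
      rw [hE1] at e1
      rw [hE2] at e2
      linarith
    have hr0 : r j0.val^2 = 1/2 := by
      rcases mul_eq_zero.mp hfin with h | h
      · linarith
      · exact absurd h hj0
    have hall := aux_refl Y heq hmaxi c r hc hr F3 j0.val hr0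
    exact hncoin (fun a b => by rw [hall a, hall b])
  · intro j k l hji hki hli hkj hlj
    by_cases hkl : k = l
    · subst hkl
      simp
    · have h2 := aux_polar (c i) (c j) (c k) (c l)
      rw [D i l hli.symm, D j k hkj.symm, D i k hki.symm, D j l hlj.symm] at h2
      linarith
end

section
/- Let Y ⊂ ℝⁿ and Y' ⊂ ℝⁿ' be finite nonempty sets with circumcenters c, c' and extents ext(Y) = ‖y - c‖ (constant over y ∈ Y) and ext(Y') = ‖y' - c'‖. If ext(Y)² + ext(Y')² ≤ 1, then there exist isometric embeddings f: ℝⁿ → ℝ^{n+n'+1} and f': ℝⁿ' → ℝ^{n+n'+1} such that ‖f(y) - f'(y')‖ = 1 for all y ∈ Y, y' ∈ Y'. -/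
/-- Auxiliary embedding: glue a vector in `ℝⁿ`, a vector in `ℝⁿ'` and a scalar
into a vector of `ℝ^(n+n'+1)`. -/
def glueEmb {n n' : ℕ} (u : EuclideanSpace ℝ (Fin n))
    (v : EuclideanSpace ℝ (Fin n')) (s : ℝ) :
    EuclideanSpace ℝ (Fin (n + n' + 1)) :=
  WithLp.toLp 2 (Fin.append (α := ℝ) (m := n) (n := n' + 1) u (Fin.snoc v s))

lemma glueEmb_castAdd {n n' : ℕ} (u : EuclideanSpace ℝ (Fin n))
    (v : EuclideanSpace ℝ (Fin n')) (s : ℝ) (j : Fin n) :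
    glueEmb u v s (Fin.castAdd (n' + 1) j) = u j := by
  simp [glueEmb, Fin.append_left]

lemma glueEmb_natAdd_castSucc {n n' : ℕ} (u : EuclideanSpace ℝ (Fin n))
    (v : EuclideanSpace ℝ (Fin n')) (s : ℝ) (j : Fin n') :
    glueEmb u v s (Fin.natAdd n j.castSucc) = v j := by
  simp [glueEmb, Fin.append_right, Fin.snoc_castSucc]

lemma glueEmb_natAdd_last {n n' : ℕ} (u : EuclideanSpace ℝ (Fin n))
    (v : EuclideanSpace ℝ (Fin n')) (s : ℝ) :
    glueEmb u v s (Fin.natAdd n (Fin.last n')) = s := by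
  unfold glueEmb
  rw [WithLp.ofLp_toLp]
  rw [Fin.append_right]
  exact Fin.snoc_last _ _

lemma glueEmb_sub {n n' : ℕ} (u u' : EuclideanSpace ℝ (Fin n))
    (v v' : EuclideanSpace ℝ (Fin n')) (s s' : ℝ) :
    glueEmb u v s - glueEmb u' v' s' = glueEmb (u - u') (v - v') (s - s') := by
  ext i
  have hi : (glueEmb u v s - glueEmb u' v' s') i = glueEmb u v s i - glueEmb u' v' s' i := rfl
  rw [hi]
  refine Fin.addCases (m := n) (n := n' + 1) (fun j => ?_) (fun j => ?_) i
  · rw [glueEmb_castAdd, glueEmb_castAdd, glueEmb_castAdd]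
    rfl
  · refine Fin.lastCases ?_ (fun k => ?_) j
    · rw [glueEmb_natAdd_last, glueEmb_natAdd_last, glueEmb_natAdd_last]
    · rw [glueEmb_natAdd_castSucc, glueEmb_natAdd_castSucc, glueEmb_natAdd_castSucc]
      rfl

lemma glueEmb_norm {n n' : ℕ} (u : EuclideanSpace ℝ (Fin n))
    (v : EuclideanSpace ℝ (Fin n')) (s : ℝ) :
    ‖glueEmb u v s‖ = Real.sqrt (‖u‖ ^ 2 + ‖v‖ ^ 2 + s ^ 2) := by
  rw [EuclideanSpace.norm_eq]
  congr 1
  have h := Fin.sum_univ_add (f := fun i : Fin (n + (n' + 1)) => ‖glueEmb u v s i‖ ^ 2)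
  refine h.trans ?_
  have h1 : ∑ j : Fin n, ‖glueEmb u v s (Fin.castAdd (n' + 1) j)‖ ^ 2 = ‖u‖ ^ 2 := by
    rw [EuclideanSpace.norm_eq u, Real.sq_sqrt (by positivity)]
    exact Finset.sum_congr rfl fun j _ => by rw [glueEmb_castAdd]
  have h2 : ∑ j : Fin (n' + 1), ‖glueEmb u v s (Fin.natAdd n j)‖ ^ 2
      = ‖v‖ ^ 2 + s ^ 2 := by
    rw [Fin.sum_univ_castSucc]
    congr 1
    · rw [EuclideanSpace.norm_eq v, Real.sq_sqrt (by positivity)]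
      exact Finset.sum_congr rfl fun j _ => by rw [glueEmb_natAdd_castSucc]
    · rw [glueEmb_natAdd_last, Real.norm_eq_abs, sq_abs]
  rw [h1, h2]
  ring

/-- Gluing: if two finite nonempty sets lie on spheres of radii (extents) `a`
and `b` around their circumcenters and `a² + b² ≤ 1`, then they can be
isometrically embedded into `ℝ^(n+n'+1)` so that every point of the first is at
distance 1 from every point of the second. -/
theorem gluing_of_spacings {n n' : ℕ}
    (Y : Set (EuclideanSpace ℝ (Fin n))) (Y' : Set (EuclideanSpace ℝ (Fin n')))
    (hfin : Y.Finite) (hfin' : Y'.Finite)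
    (hne : Y.Nonempty) (hne' : Y'.Nonempty)
    (c : EuclideanSpace ℝ (Fin n)) (c' : EuclideanSpace ℝ (Fin n')) (a b : ℝ)
    (ha : ∀ y ∈ Y, ‖y - c‖ = a) (hb : ∀ y' ∈ Y', ‖y' - c'‖ = b)
    (hab : a ^ 2 + b ^ 2 ≤ 1) :
    ∃ (f : EuclideanSpace ℝ (Fin n) → EuclideanSpace ℝ (Fin (n + n' + 1)))
      (f' : EuclideanSpace ℝ (Fin n') → EuclideanSpace ℝ (Fin (n + n' + 1))),
      Isometry f ∧ Isometry f' ∧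
      ∀ y ∈ Y, ∀ y' ∈ Y', ‖f y - f' y'‖ = 1 := by
  set t : ℝ := Real.sqrt (1 - a ^ 2 - b ^ 2) with ht
  have ht2 : t ^ 2 = 1 - a ^ 2 - b ^ 2 := Real.sq_sqrt (by linarith)
  refine ⟨fun y => glueEmb (y - c) 0 0, fun y' => glueEmb 0 (y' - c') t, ?_, ?_, ?_⟩
  · apply Isometry.of_dist_eq
    intro x₁ x₂
    rw [dist_eq_norm, dist_eq_norm, glueEmb_sub, glueEmb_norm]
    simp only [sub_sub_sub_cancel_right, sub_zero, sub_self, norm_zero]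
    have : ‖x₁ - x₂‖ ^ 2 + (0:ℝ) ^ 2 + (0:ℝ) ^ 2 = ‖x₁ - x₂‖ ^ 2 := by ring
    rw [this, Real.sqrt_sq (norm_nonneg _)]
  · apply Isometry.of_dist_eq
    intro x₁ x₂
    rw [dist_eq_norm, dist_eq_norm, glueEmb_sub, glueEmb_norm]
    simp only [sub_sub_sub_cancel_right, sub_zero, sub_self, norm_zero]
    have : (0:ℝ) ^ 2 + ‖x₁ - x₂‖ ^ 2 + (0:ℝ) ^ 2 = ‖x₁ - x₂‖ ^ 2 := by ring
    rw [this, Real.sqrt_sq (norm_nonneg _)]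
  · intro y hy y' hy'
    rw [glueEmb_sub, glueEmb_norm]
    rw [sub_zero, zero_sub, zero_sub, norm_neg, ha y hy, hb y' hy']
    have : a ^ 2 + b ^ 2 + (-t) ^ 2 = 1 := by rw [neg_pow]; rw [ht2]; ring
    rw [this, Real.sqrt_one]
end

section
/- Let Y₁, ..., Y_I ⊂ ℝⁿ be a maximal equidistant spacing with I ≥ 3 whose centers all coincide at a point c. Then r_i = √2/2 for every class i, where r_i is the radius of Y_i. -/
open RealInnerProductSpace

/-- If an affine-linear functional `⟪· - c0, v⟫` is constant `t` on a set whose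
affine span contains `c0`, then `t = 0`. -/
lemma aux_const_zero {n : ℕ} (S : Set (EuclideanSpace ℝ (Fin n)))
    (c0 : EuclideanSpace ℝ (Fin n)) (hc : c0 ∈ affineSpan ℝ S)
    (v : EuclideanSpace ℝ (Fin n)) (t : ℝ)
    (h : ∀ y ∈ S, ⟪y - c0, v⟫ = t) : t = 0 := by
  set f : EuclideanSpace ℝ (Fin n) →ᵃ[ℝ] ℝ :=
    AffineMap.mk' (fun x => ⟪x - c0, v⟫) ((innerSL ℝ v).toLinearMap) c0
      (by intro p; simp; exact Finset.sum_congr rfl fun x _ => mul_comm _ _) with hf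
  have hle : affineSpan ℝ S ≤ (affineSpan ℝ ({t} : Set ℝ)).comap f := by
    rw [affineSpan_le]
    intro y hy
    show f y ∈ affineSpan ℝ ({t} : Set ℝ)
    have : f y = t := by simpa [hf] using h y hy
    rw [this]
    exact mem_affineSpan ℝ (Set.mem_singleton t)
  have hmem : f c0 ∈ affineSpan ℝ ({t} : Set ℝ) := hle hc
  have : f c0 = t := (AffineSubspace.mem_affineSpan_singleton _ _).1 hmem
  have hfc : f c0 = 0 := by simp [hf]
  rw [hfc] at this
  exact this.symm

/-- For a maximal equidistant spacing with at least three classes whose centers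
all coincide, every radius equals `√2 / 2`. -/
theorem coinciding_centers_radius {n I : ℕ} (hI : 3 ≤ I)
    (Y : Fin I → Set (EuclideanSpace ℝ (Fin n)))
    (hne : ∀ i, (Y i).Nonempty) (hmax : IsMaximalEquidistant Y)
    (c : Fin I → EuclideanSpace ℝ (Fin n)) (r : Fin I → ℝ)
    (hc : ∀ i, c i ∈ affineSpan ℝ (Y i))
    (hr : ∀ i, ∀ y ∈ Y i, ‖y - c i‖ = r i)
    (c0 : EuclideanSpace ℝ (Fin n)) (hcoin : ∀ i, c i = c0) :
    ∀ i, r i = Real.sqrt 2 / 2 := by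
  have hr0 : ∀ i, ∀ y ∈ Y i, ‖y - c0‖ = r i := by
    intro i y hy; rw [← hcoin i]; exact hr i y hy
  have hrnn : ∀ i, 0 ≤ r i := by
    intro i
    obtain ⟨y, hy⟩ := hne i
    rw [← hr0 i y hy]; exact norm_nonneg _
  -- key: r i ^ 2 + r j ^ 2 = 1 for i ≠ j
  have key : ∀ i j : Fin I, i ≠ j → r i ^ 2 + r j ^ 2 = 1 := by
    intro i j hij
    obtain ⟨yj, hyj⟩ := hne j
    have hconst : ∀ y ∈ Y i, ⟪y - c0, yj - c0⟫ = (r i ^ 2 + r j ^ 2 - 1) / 2 := by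
      intro y hy
      have h1 : ‖y - yj‖ = 1 := hmax.1 i j hij y hy yj hyj
      have h2 : ‖(y - c0) - (yj - c0)‖ ^ 2 =
          ‖y - c0‖ ^ 2 - 2 * ⟪y - c0, yj - c0⟫ + ‖yj - c0‖ ^ 2 :=
        norm_sub_sq_real _ _
      rw [hr0 i y hy, hr0 j yj hyj] at h2
      have h3 : (y - c0) - (yj - c0) = y - yj := by abel
      rw [h3, h1] at h2
      nlinarith [h2]
    have hc' : c0 ∈ affineSpan ℝ (Y i) := by rw [← hcoin i]; exact hc i
    have := aux_const_zero (Y i) c0 hc' (yj - c0) _ hconst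
    linarith
  intro i
  -- pick j k distinct from i and each other
  obtain ⟨j, k, hij, hik, hjk⟩ :
      ∃ j k : Fin I, i ≠ j ∧ i ≠ k ∧ j ≠ k := by
    have h0 : (0 : ℕ) < I := by omega
    have h1 : (1 : ℕ) < I := by omega
    have h2 : (2 : ℕ) < I := by omega
    set a : Fin I := ⟨0, h0⟩
    set b : Fin I := ⟨1, h1⟩
    set d : Fin I := ⟨2, h2⟩
    by_cases ha : i = a
    · exact ⟨b, d, by simp [ha, a, b, d, Fin.ext_iff], by simp [ha, a, b, d, Fin.ext_iff],
        by simp [b, d, Fin.ext_iff]⟩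
    · by_cases hb : i = b
      · exact ⟨a, d, by simp [hb, a, b, d, Fin.ext_iff], by simp [hb, a, b, d, Fin.ext_iff],
          by simp [a, d, Fin.ext_iff]⟩
      · exact ⟨a, b, ha, hb, by simp [a, b, Fin.ext_iff]⟩
  have e1 := key i j hij
  have e2 := key i k hik
  have e3 := key j k hjk
  have hsq : r i ^ 2 = 1 / 2 := by linarith
  have h2 : (Real.sqrt 2 / 2) ^ 2 = 1 / 2 := by
    rw [div_pow, Real.sq_sqrt (by norm_num : (2:ℝ) ≥ 0)]; norm_num
  have hpos : (0:ℝ) ≤ Real.sqrt 2 / 2 := by positivity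
  nlinarith [sq_nonneg (r i - Real.sqrt 2 / 2), sq_nonneg (r i + Real.sqrt 2 / 2), hrnn i]
end

section
/- Let Y₁, ..., Y_I ⊂ ℝⁿ be a maximal equidistant spacing with I ≥ 3 whose centers do not all coincide, with radii r₁, ..., r_I. Then class i is the inner class (c_i lies in the convex hull of the other centers) if and only if r_i > √2/2, if and only if r_i = max_j r_j. -/
open RealInnerProductSpace

variable {F : Type*} [NormedAddCommGroup F] [InnerProductSpace ℝ F]

lemma aux_inner_affine {s : Set F} {v : F} {k : ℝ} (h : ∀ y ∈ s, ⟪y, v⟫ = k)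
    {x : F} (hx : x ∈ affineSpan ℝ s) : ⟪x, v⟫ = k := by
  refine affineSpan_induction (p := fun x => ⟪x, v⟫ = k) hx h ?_
  intro a u u' w hu hu' hw
  simp only [vsub_eq_sub, vadd_eq_add, inner_add_left, real_inner_smul_left, inner_sub_left,
    hu, hu', hw]
  ring

lemma aux_exists_weights_affine {I : ℕ} (c : Fin I → F) (A : Set (Fin I)) {x : F}
    (hx : x ∈ affineSpan ℝ (c '' A)) :
    ∃ u : Fin I → ℝ, (∀ j ∉ A, u j = 0) ∧ ∑ j, u j = 1 ∧ x = ∑ j, u j • c j := by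
  refine affineSpan_induction (p := fun x =>
    ∃ u : Fin I → ℝ, (∀ j ∉ A, u j = 0) ∧ ∑ j, u j = 1 ∧ x = ∑ j, u j • c j) hx ?_ ?_
  · rintro y ⟨j, hj, rfl⟩
    refine ⟨fun k => if k = j then 1 else 0, ?_, ?_, ?_⟩
    · intro k hk
      simp only [ite_eq_right_iff]
      rintro rfl; exact absurd hj hk
    · simp
    · simp [ite_smul]
  · rintro a x₁ x₂ x₃ ⟨u₁, h₁0, h₁s, rfl⟩ ⟨u₂, h₂0, h₂s, rfl⟩ ⟨u₃, h₃0, h₃s, rfl⟩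
    refine ⟨fun k => a * (u₁ k - u₂ k) + u₃ k, ?_, ?_, ?_⟩
    · intro k hk; simp [h₁0 k hk, h₂0 k hk, h₃0 k hk]
    · simp only [Finset.sum_add_distrib, ← Finset.mul_sum, Finset.sum_sub_distrib, h₁s, h₂s, h₃s]
      ring
    · simp only [vsub_eq_sub, vadd_eq_add, add_smul, mul_smul, sub_smul,
        Finset.sum_add_distrib, Finset.sum_sub_distrib, ← Finset.smul_sum]

lemma aux_exists_weights_convex {I : ℕ} (c : Fin I → F) (A : Set (Fin I)) {x : F}
    (hx : x ∈ convexHull ℝ (c '' A)) :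
    ∃ u : Fin I → ℝ, (∀ j, 0 ≤ u j) ∧ (∀ j ∉ A, u j = 0) ∧ ∑ j, u j = 1 ∧
      x = ∑ j, u j • c j := by
  have : c '' A ⊆ {x : F | ∃ u : Fin I → ℝ, (∀ j, 0 ≤ u j) ∧ (∀ j ∉ A, u j = 0) ∧
      ∑ j, u j = 1 ∧ x = ∑ j, u j • c j} → Convex ℝ {x : F | ∃ u : Fin I → ℝ, (∀ j, 0 ≤ u j) ∧
      (∀ j ∉ A, u j = 0) ∧ ∑ j, u j = 1 ∧ x = ∑ j, u j • c j} → _ := fun h1 h2 => convexHull_min h1 h2 hx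
  refine this ?_ ?_
  · rintro y ⟨j, hj, rfl⟩
    refine ⟨fun k => if k = j then 1 else 0, ?_, ?_, ?_, ?_⟩
    · intro k; positivity
    · intro k hk
      simp only [ite_eq_right_iff]
      rintro rfl; exact absurd hj hk
    · simp
    · simp [ite_smul]
  · rintro x ⟨u₁, h₁n, h₁0, h₁s, rfl⟩ y ⟨u₂, h₂n, h₂0, h₂s, rfl⟩ a b ha hb hab
    refine ⟨fun k => a * u₁ k + b * u₂ k, ?_, ?_, ?_, ?_⟩
    · intro k; have := h₁n k; have := h₂n k; positivity
    · intro k hk; simp [h₁0 k hk, h₂0 k hk]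
    · simp only [Finset.sum_add_distrib, ← Finset.mul_sum, h₁s, h₂s]
      simpa using hab
    · simp only [add_smul, mul_smul, Finset.sum_add_distrib, ← Finset.smul_sum]

section Geom

variable {n I : ℕ} {Y : Fin I → Set (EuclideanSpace ℝ (Fin n))}
  {c : Fin I → EuclideanSpace ℝ (Fin n)} {r : Fin I → ℝ}

lemma aux_dist_center_point
    (heq : ∀ i j : Fin I, i ≠ j → ∀ yi ∈ Y i, ∀ yj ∈ Y j, ‖yi - yj‖ = 1)
    (hc : ∀ i, c i ∈ affineSpan ℝ (Y i))
    (hr : ∀ i, ∀ y ∈ Y i, ‖y - c i‖ = r i)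
    {i j : Fin I} (hij : i ≠ j) {y : EuclideanSpace ℝ (Fin n)} (hy : y ∈ Y j) :
    ‖c i - y‖ ^ 2 = 1 - r i ^ 2 := by
  have key : ∀ yi ∈ Y i, ⟪yi, c i - y⟫ = (1 - r i ^ 2 - ‖y‖ ^ 2 + ‖c i‖ ^ 2) / 2 := by
    intro yi hyi
    have h1 : ‖yi - y‖ = 1 := heq i j hij yi hyi y hy
    have h2 : ‖yi - c i‖ = r i := hr i yi hyi
    have e1 := norm_sub_sq_real yi y
    have e2 := norm_sub_sq_real yi (c i)
    rw [h1] at e1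
    rw [h2] at e2
    rw [inner_sub_right]
    linarith
  have hk := aux_inner_affine key (hc i)
  rw [inner_sub_right, real_inner_self_eq_norm_sq] at hk
  have e := norm_sub_sq_real (c i) y
  have hcomm := real_inner_comm (c i) y
  linarith

lemma aux_dist_centers
    (heq : ∀ i j : Fin I, i ≠ j → ∀ yi ∈ Y i, ∀ yj ∈ Y j, ‖yi - yj‖ = 1)
    (hc : ∀ i, c i ∈ affineSpan ℝ (Y i))
    (hr : ∀ i, ∀ y ∈ Y i, ‖y - c i‖ = r i)
    {i j : Fin I} (hij : i ≠ j) :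
    ‖c i - c j‖ ^ 2 = 1 - r i ^ 2 - r j ^ 2 := by
  have key : ∀ y ∈ Y j, ⟪y, c j - c i⟫ =
      (‖c j‖ ^ 2 - r j ^ 2 - ‖c i‖ ^ 2 + 1 - r i ^ 2) / 2 := by
    intro y hy
    have h1 : ‖c i - y‖ ^ 2 = 1 - r i ^ 2 := aux_dist_center_point heq hc hr hij hy
    have h2 : ‖y - c j‖ = r j := hr j y hy
    have e1 := norm_sub_sq_real (c i) y
    have e2 := norm_sub_sq_real y (c j)
    rw [h2] at e2
    have hcomm := real_inner_comm (c i) y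
    rw [inner_sub_right]
    linarith
  have hk := aux_inner_affine key (hc j)
  rw [inner_sub_right, real_inner_self_eq_norm_sq] at hk
  have e := norm_sub_sq_real (c i) (c j)
  have hcomm := real_inner_comm (c j) (c i)
  linarith

lemma aux_orth
    (heq : ∀ i j : Fin I, i ≠ j → ∀ yi ∈ Y i, ∀ yj ∈ Y j, ‖yi - yj‖ = 1)
    (hc : ∀ i, c i ∈ affineSpan ℝ (Y i))
    (hr : ∀ i, ∀ y ∈ Y i, ‖y - c i‖ = r i)
    {j k : Fin I} (hjk : j ≠ k) {y : EuclideanSpace ℝ (Fin n)} (hy : y ∈ Y j) :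
    ⟪y - c j, c j - c k⟫ = 0 := by
  have key : ∀ y' ∈ Y k, ⟪y', y - c j⟫ = ⟪c j, y - c j⟫ := by
    intro y' hy'
    have h1 : ‖y - y'‖ = 1 := heq j k hjk y hy y' hy'
    have h2 : ‖c j - y'‖ ^ 2 = 1 - r j ^ 2 := aux_dist_center_point heq hc hr hjk hy'
    have h4 : ‖y - c j‖ = r j := hr j y hy
    have e := norm_add_sq_real (y - c j) (c j - y')
    rw [sub_add_sub_cancel, h1, h2, h4] at e
    have h5 : ⟪y - c j, c j - y'⟫ = 0 := by
      have hrnn : 0 ≤ r j := by rw [← h4]; exact norm_nonneg _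
      nlinarith
    rw [inner_sub_right] at h5
    have c1 := real_inner_comm (y - c j) y'
    have c2 := real_inner_comm (y - c j) (c j)
    linarith
  have hk := aux_inner_affine key (hc k)
  rw [inner_sub_right]
  have c1 := real_inner_comm (y - c j) (c k)
  have c2 := real_inner_comm (y - c j) (c j)
  linarith

lemma aux_orth2
    (heq : ∀ i j : Fin I, i ≠ j → ∀ yi ∈ Y i, ∀ yj ∈ Y j, ‖yi - yj‖ = 1)
    (hc : ∀ i, c i ∈ affineSpan ℝ (Y i))
    (hr : ∀ i, ∀ y ∈ Y i, ‖y - c i‖ = r i)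
    {j : Fin I} {y : EuclideanSpace ℝ (Fin n)} (hy : y ∈ Y j) (k l : Fin I) :
    ⟪y - c j, c k - c l⟫ = 0 := by
  have A : ∀ k : Fin I, ⟪y - c j, c j - c k⟫ = 0 := by
    intro k
    by_cases h : j = k
    · subst h; simp
    · exact aux_orth heq hc hr h hy
  have hrw : c k - c l = (c j - c l) - (c j - c k) := by abel
  rw [hrw, inner_sub_right, A, A, sub_zero]

end Geom

section Geom
variable {n I : ℕ} {Y : Fin I → Set (EuclideanSpace ℝ (Fin n))}
  {c : Fin I → EuclideanSpace ℝ (Fin n)} {r : Fin I → ℝ}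

set_option maxHeartbeats 1000000 in
lemma aux_key
    (hB : ∀ i j : Fin I, i ≠ j → ∀ y ∈ Y j, ‖c i - y‖ ^ 2 = 1 - r i ^ 2)
    (hO : ∀ (j : Fin I) (y : EuclideanSpace ℝ (Fin n)), y ∈ Y j → ∀ k l : Fin I,
      ⟪y - c j, c k - c l⟫ = 0)
    (hI : 3 ≤ I)
    (hne : ∀ i, (Y i).Nonempty)
    (heq : ∀ i j : Fin I, i ≠ j → ∀ yi ∈ Y i, ∀ yj ∈ Y j, ‖yi - yj‖ = 1)
    (hmax : ∀ Y' : Fin I → Set (EuclideanSpace ℝ (Fin n)),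
      (∀ i j : Fin I, i ≠ j → ∀ yi ∈ Y' i, ∀ yj ∈ Y' j, ‖yi - yj‖ = 1) →
      (∀ i, Y i ⊆ Y' i) → ∀ i, Y' i = Y i)
    (hr : ∀ i, ∀ y ∈ Y i, ‖y - c i‖ = r i)
    (i : Fin I) : c i ∈ affineSpan ℝ (c '' {j | j ≠ i}) := by
  classical
  have hnt : ∃ j0 : Fin I, j0 ≠ i := by
    have h0 : 0 < I := by omega
    have h1 : 1 < I := by omega
    by_cases h : (⟨0, h0⟩ : Fin I) = i
    · exact ⟨⟨1, h1⟩, by rw [← h]; simp [Fin.ext_iff]⟩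
    · exact ⟨⟨0, h0⟩, h⟩
  obtain ⟨j0, hj0⟩ := hnt
  obtain ⟨y0, hy0⟩ := hne j0
  set U : Set (EuclideanSpace ℝ (Fin n)) := ⋃ j ∈ {j : Fin I | j ≠ i}, Y j with hU
  have hy0U : y0 ∈ U := Set.mem_biUnion (show j0 ∈ {j : Fin I | j ≠ i} from hj0) hy0
  set Z : Set (EuclideanSpace ℝ (Fin n)) :=
    {x | ∀ j, j ≠ i → ∀ y ∈ Y j, ‖x - y‖ = 1} with hZdef
  have hZY : Z = Y i := by
    set Y' := Function.update Y i Z with hY'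
    have hup : ∀ j, j ≠ i → Y' j = Y j := fun j hj => Function.update_of_ne hj _ _
    have hupi : Y' i = Z := Function.update_self _ _ _
    have heq' : ∀ a b : Fin I, a ≠ b → ∀ ya ∈ Y' a, ∀ yb ∈ Y' b, ‖ya - yb‖ = 1 := by
      intro a b hab ya hya yb hyb
      by_cases ha : a = i
      · subst ha
        rw [hupi] at hya
        rw [hup b (Ne.symm hab)] at hyb
        exact hya b (Ne.symm hab) yb hyb
      · rw [hup a ha] at hya
        by_cases hb : b = i
        · subst hb
          rw [hupi] at hyb
          rw [norm_sub_rev]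
          exact hyb a ha ya hya
        · rw [hup b hb] at hyb
          exact heq a b hab ya hya yb hyb
    have hsub : ∀ j, Y j ⊆ Y' j := by
      intro j
      by_cases hj : j = i
      · subst hj
        rw [hupi]
        intro x hx k hk y hy
        exact heq j k (Ne.symm hk) x hx y hy
      · rw [hup j hj]
    have h := hmax Y' heq' hsub i
    rw [hupi] at h
    exact h
  set V : Submodule ℝ (EuclideanSpace ℝ (Fin n)) := vectorSpan ℝ U with hV
  set a : EuclideanSpace ℝ (Fin n) := (V.orthogonalProjectionOnto (c i - y0) : EuclideanSpace ℝ (Fin n)) with ha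
  set w : EuclideanSpace ℝ (Fin n) := (c i - y0) - a with hwdef
  have hw_orth : w ∈ Vᗮ := Submodule.sub_starProjection_mem_orthogonal _
  have ha_mem : a ∈ V := SetLike.coe_mem _
  have hw0 : w = 0 := by
    by_contra hw
    have hwpos : 0 < ‖w‖ := norm_pos_iff.2 hw
    have hwne : ‖w‖ ≠ 0 := ne_of_gt hwpos
    set ρ : ℝ := Real.sqrt (r i ^ 2 + ‖w‖ ^ 2) with hρ
    have hρ2 : ρ ^ 2 = r i ^ 2 + ‖w‖ ^ 2 := Real.sq_sqrt (by positivity)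
    have hρnn : 0 ≤ ρ := Real.sqrt_nonneg _
    have hρpos : 0 < ρ := by nlinarith
    have hcand : ∀ t : ℝ, t ^ 2 * ‖w‖ ^ 2 = r i ^ 2 + ‖w‖ ^ 2 →
        (c i + (t - 1) • w) ∈ Z := by
      intro t ht j hj y hy
      have hyU : y ∈ U := Set.mem_biUnion (show j ∈ {j : Fin I | j ≠ i} from hj) hy
      have hyV : (y - y0) ∈ V := vsub_mem_vectorSpan ℝ hyU hy0U
      have hinner : ⟪c i - y, w⟫ = ‖w‖ ^ 2 := by
        have hsplit : c i - y = (a - (y - y0)) + w := by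
          rw [hwdef]; abel
        rw [hsplit, inner_add_left]
        have h1 : ⟪a - (y - y0), w⟫ = 0 :=
          (Submodule.mem_orthogonal V w).1 hw_orth _ (sub_mem ha_mem hyV)
        rw [h1, real_inner_self_eq_norm_sq, zero_add]
      have hBy : ‖c i - y‖ ^ 2 = 1 - r i ^ 2 := hB i j (Ne.symm hj) y hy
      have hrw2 : c i + (t - 1) • w - y = (c i - y) + (t - 1) • w := by abel
      have expand : ‖c i + (t - 1) • w - y‖ ^ 2 = 1 := by
        rw [hrw2, norm_add_sq_real, real_inner_smul_right, hinner, hBy, norm_smul,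
          Real.norm_eq_abs, mul_pow, sq_abs]
        nlinarith
      have hnn : 0 ≤ ‖c i + (t - 1) • w - y‖ := norm_nonneg _
      nlinarith
    have hside : (ρ / ‖w‖) ^ 2 * ‖w‖ ^ 2 = r i ^ 2 + ‖w‖ ^ 2 := by
      rw [div_pow, div_mul_cancel₀ _ (pow_ne_zero 2 hwne)]
      exact hρ2
    have hside2 : (-(ρ / ‖w‖)) ^ 2 * ‖w‖ ^ 2 = r i ^ 2 + ‖w‖ ^ 2 := by
      rw [neg_sq]; exact hside
    have hm1 := hcand (ρ / ‖w‖) hside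
    have hm2 := hcand (-(ρ / ‖w‖)) hside2
    rw [hZY] at hm1 hm2
    have e1 := hr i _ hm1
    have e2 := hr i _ hm2
    simp only [add_sub_cancel_left] at e1 e2
    rw [norm_smul, Real.norm_eq_abs] at e1 e2
    have q1 : (ρ / ‖w‖ - 1) ^ 2 * ‖w‖ ^ 2 = r i ^ 2 := by
      rw [← e1, mul_pow, sq_abs]
    have q2 : (-(ρ / ‖w‖) - 1) ^ 2 * ‖w‖ ^ 2 = r i ^ 2 := by
      rw [← e2, mul_pow, sq_abs]
    have hx : ρ = (ρ / ‖w‖) * ‖w‖ := (div_mul_cancel₀ ρ hwne).symm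
    nlinarith [q1, q2, mul_pos hρpos hwpos, hx]
  have hcy : c i - y0 ∈ V := by
    have h : c i - y0 = a := by
      rw [hwdef] at hw0
      rwa [sub_eq_zero] at hw0
    rw [h]; exact ha_mem
  set C0 : Submodule ℝ (EuclideanSpace ℝ (Fin n)) := vectorSpan ℝ (c '' {j | j ≠ i}) with hC0
  set Fm : Submodule ℝ (EuclideanSpace ℝ (Fin n)) :=
    Submodule.span ℝ (⋃ j ∈ {j : Fin I | j ≠ i}, (fun y => y - c j) '' Y j) with hFm
  have hVle : V ≤ C0 ⊔ Fm := by
    rw [hV, vectorSpan_def]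
    apply Submodule.span_le.2
    rintro v hv
    rw [Set.mem_vsub] at hv
    obtain ⟨y, hy, y', hy', rfl⟩ := hv
    rw [hU, Set.mem_iUnion₂] at hy hy'
    obtain ⟨j, hj, hyj⟩ := hy
    obtain ⟨k, hk, hy'k⟩ := hy'
    have hd : y -ᵥ y' = ((y - c j) - (y' - c k)) + (c j - c k) := by
      simp only [vsub_eq_sub]; abel
    rw [SetLike.mem_coe, hd]
    refine Submodule.add_mem _ (Submodule.mem_sup_right ?_) (Submodule.mem_sup_left ?_)
    · exact sub_mem
        (Submodule.subset_span (Set.mem_biUnion hj ⟨y, hyj, rfl⟩))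
        (Submodule.subset_span (Set.mem_biUnion hk ⟨y', hy'k, rfl⟩))
    · exact vsub_mem_vectorSpan ℝ ⟨j, hj, rfl⟩ ⟨k, hk, rfl⟩
  have hFD : Fm ≤ (vectorSpan ℝ (Set.range c))ᗮ := by
    rw [hFm]
    apply Submodule.span_le.2
    rintro v hv
    rw [Set.mem_iUnion₂] at hv
    obtain ⟨j, hj, y, hy, rfl⟩ := hv
    rw [SetLike.mem_coe, Submodule.mem_orthogonal]
    intro u hu
    have hD : vectorSpan ℝ (Set.range c) ≤ (Submodule.span ℝ {y - c j})ᗮ := by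
      rw [vectorSpan_def]
      apply Submodule.span_le.2
      rintro d hd
      rw [Set.mem_vsub] at hd
      obtain ⟨p, ⟨k, rfl⟩, q, ⟨l, rfl⟩, rfl⟩ := hd
      rw [SetLike.mem_coe, Submodule.mem_orthogonal_singleton_iff_inner_right]
      exact hO j y hy k l
    have h2 := Submodule.mem_orthogonal_singleton_iff_inner_right.1 (hD hu)
    rw [real_inner_comm]
    exact h2
  have haG := hVle hcy
  obtain ⟨γ, hγ, ε, hε, hsum⟩ := Submodule.mem_sup.1 haG
  have hε'F : ε + (y0 - c j0) ∈ Fm := by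
    refine add_mem hε (Submodule.subset_span ?_)
    exact Set.mem_biUnion (show j0 ∈ {j : Fin I | j ≠ i} from hj0) ⟨y0, hy0, rfl⟩
  have hciD : c i - c j0 ∈ vectorSpan ℝ (Set.range c) :=
    vsub_mem_vectorSpan ℝ (Set.mem_range_self i) (Set.mem_range_self j0)
  have hγD : γ ∈ vectorSpan ℝ (Set.range c) := by
    have : C0 ≤ vectorSpan ℝ (Set.range c) := by
      rw [hC0]
      exact vectorSpan_mono ℝ (Set.image_subset_range c _)
    exact this hγ
  have hdec : c i - c j0 = γ + (ε + (y0 - c j0)) := by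
    rw [← add_assoc, hsum]; abel
  have hperp1 : ⟪c i - c j0, ε + (y0 - c j0)⟫ = 0 :=
    (Submodule.mem_orthogonal _ _).1 (hFD hε'F) _ hciD
  have hperp2 : ⟪γ, ε + (y0 - c j0)⟫ = 0 :=
    (Submodule.mem_orthogonal _ _).1 (hFD hε'F) _ hγD
  have hee : ⟪ε + (y0 - c j0), ε + (y0 - c j0)⟫ = 0 := by
    have hε'eq : ε + (y0 - c j0) = (c i - c j0) - γ := by rw [hdec]; abel
    nth_rewrite 1 [hε'eq]
    rw [inner_sub_left, hperp1, hperp2, sub_zero]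
  have hε'0 : ε + (y0 - c j0) = 0 := inner_self_eq_zero.1 hee
  have hγeq : c i - c j0 = γ := by rw [hdec, hε'0, add_zero]
  have hfin : c i = γ +ᵥ c j0 := by
    rw [vadd_eq_add, ← hγeq]; abel
  rw [hfin]
  refine AffineSubspace.vadd_mem_of_mem_direction ?_ (subset_affineSpan ℝ _ ⟨j0, hj0, rfl⟩)
  rw [direction_affineSpan]
  exact hγ
end Geom


lemma aux_gram {n I : ℕ} {c : Fin I → EuclideanSpace ℝ (Fin n)} {s : Fin I → ℝ}
    (hdist : ∀ j k : Fin I, j ≠ k → ‖c j - c k‖ ^ 2 = s j + s k)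
    (i : Fin I) (u : Fin I → ℝ) (hui : u i = 0) (hsum : ∑ j, u j = 1) :
    ‖c i - ∑ j, u j • c j‖ ^ 2 = s i + ∑ j, u j ^ 2 * s j := by
  classical
  have h1 : c i - ∑ j, u j • c j = ∑ j, u j • (c i - c j) := by
    simp only [smul_sub, Finset.sum_sub_distrib, ← Finset.sum_smul, hsum, one_smul]
  have h2 : ∀ j k : Fin I, ⟪u j • (c i - c j), u k • (c i - c k)⟫
      = u j * u k * s i + (if j = k then u j ^ 2 * s j else 0) := by
    intro j k
    by_cases hj : j = i
    · subst hj
      simp [hui]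
    · by_cases hk : k = i
      · subst hk
        simp [hui, hj]
      · by_cases hjk : j = k
        · subst hjk
          rw [real_inner_smul_left, real_inner_smul_right, real_inner_self_eq_norm_sq,
            hdist i j (fun h => hj h.symm), if_pos rfl]
          ring
        · have key : ⟪c i - c j, c i - c k⟫ = s i := by
            have en := norm_sub_sq_real (c i - c j) (c i - c k)
            rw [show (c i - c j) - (c i - c k) = -(c j - c k) by abel, norm_neg] at en
            rw [hdist i j (fun h => hj h.symm), hdist i k (fun h => hk h.symm),
              hdist j k hjk] at en
            linarith
          rw [real_inner_smul_left, real_inner_smul_right, key, if_neg hjk]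
          ring
  rw [h1, ← real_inner_self_eq_norm_sq, inner_sum]
  simp only [sum_inner]
  rw [show ∑ k : Fin I, ∑ j : Fin I, ⟪u j • (c i - c j), u k • (c i - c k)⟫
      = ∑ k : Fin I, ∑ j : Fin I,
        (u j * u k * s i + (if j = k then u j ^ 2 * s j else 0)) from
    Finset.sum_congr rfl fun k _ => Finset.sum_congr rfl fun j _ => h2 j k]
  simp only [Finset.sum_add_distrib]
  have hA : ∑ k : Fin I, ∑ j : Fin I, u j * u k * s i = s i := by
    have h3 : ∀ k : Fin I, ∑ j : Fin I, u j * u k * s i = u k * s i := by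
      intro k
      simp only [mul_assoc]
      rw [← Finset.sum_mul, hsum, one_mul]
    rw [Finset.sum_congr rfl fun k _ => h3 k, ← Finset.sum_mul, hsum, one_mul]
  have hBt : ∑ k : Fin I, ∑ j : Fin I, (if j = k then u j ^ 2 * s j else 0)
      = ∑ k : Fin I, u k ^ 2 * s k := by
    refine Finset.sum_congr rfl fun k _ => ?_
    simp [Finset.sum_ite_eq']
  rw [hA, hBt]


set_option maxHeartbeats 2000000 in
/-- Characterization of the inner class: for a maximal equidistant spacing with
`I ≥ 3` whose centers do not all coincide, class `i` is inner (its center lies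
in the convex hull of the other centers) iff `r i > √2/2` iff `r i` is maximal
among the radii. -/
theorem inner_class_characterization {n I : ℕ} (hI : 3 ≤ I)
    (Y : Fin I → Set (EuclideanSpace ℝ (Fin n)))
    (hne : ∀ i, (Y i).Nonempty) (hmax : IsMaximalEquidistant Y)
    (c : Fin I → EuclideanSpace ℝ (Fin n)) (r : Fin I → ℝ)
    (hc : ∀ i, c i ∈ affineSpan ℝ (Y i))
    (hr : ∀ i, ∀ y ∈ Y i, ‖y - c i‖ = r i)
    (hncoin : ¬ ∀ i j : Fin I, c i = c j) :
    ∀ i : Fin I,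
      (c i ∈ convexHull ℝ (c '' {j | j ≠ i}) ↔ Real.sqrt 2 / 2 < r i) ∧
      (c i ∈ convexHull ℝ (c '' {j | j ≠ i}) ↔ ∀ j, r j ≤ r i) := by
  classical

  obtain ⟨heq, hmaxx⟩ := hmax
  have hB : ∀ i j : Fin I, i ≠ j → ∀ y ∈ Y j, ‖c i - y‖ ^ 2 = 1 - r i ^ 2 :=
    fun i j h y hy => aux_dist_center_point heq hc hr h hy
  have hO : ∀ (j : Fin I) (y : EuclideanSpace ℝ (Fin n)), y ∈ Y j → ∀ k l : Fin I,
      ⟪y - c j, c k - c l⟫ = 0 := fun j y hy k l => aux_orth2 heq hc hr hy k l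
  have hKEY : ∀ i, c i ∈ affineSpan ℝ (c '' {j | j ≠ i}) :=
    fun i => aux_key hB hO hI hne heq hmaxx hr i
  set s : Fin I → ℝ := fun j => 1 / 2 - r j ^ 2 with hs
  have hrnn : ∀ j, 0 ≤ r j := fun j => by
    obtain ⟨y, hy⟩ := hne j
    rw [← hr j y hy]; exact norm_nonneg _
  have hdist : ∀ j k : Fin I, j ≠ k → ‖c j - c k‖ ^ 2 = s j + s k := by
    intro j k hjk
    rw [aux_dist_centers heq hc hr hjk]; simp only [hs]; ring
  have hsnn : ∀ j k : Fin I, j ≠ k → 0 ≤ s j + s k := fun j k h => by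
    rw [← hdist j k h]; positivity
  have hEQ : ∀ i : Fin I, ∃ u : Fin I → ℝ,
      u i = 0 ∧ ∑ j, u j = 1 ∧ s i + ∑ j, u j ^ 2 * s j = 0 := by
    intro i
    obtain ⟨u, hu0, husum, hux⟩ := aux_exists_weights_affine c {j | j ≠ i} (hKEY i)
    have hui : u i = 0 := hu0 i (by simp)
    refine ⟨u, hui, husum, ?_⟩
    have hg := aux_gram hdist i u hui husum
    rw [← hux, sub_self, norm_zero] at hg
    have h0 : (0:ℝ) ^ 2 = 0 := by norm_num
    linarith [hg, h0]
  -- Step A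
  have hm : ∃ m, s m < 0 := by
    by_contra h
    push_neg at h
    have hz : ∀ i, s i = 0 := by
      intro i
      obtain ⟨u, hui, hus, hueq⟩ := hEQ i
      have h1 : 0 ≤ ∑ j, u j ^ 2 * s j :=
        Finset.sum_nonneg fun j _ => mul_nonneg (sq_nonneg _) (h j)
      linarith [h i]
    apply hncoin
    intro a b
    by_cases hab : a = b
    · rw [hab]
    · have hd := hdist a b hab
      rw [hz a, hz b] at hd
      have h2 : ‖c a - c b‖ ^ 2 = 0 := by linarith
      have h3 : ‖c a - c b‖ = 0 := by
        have := sq_nonneg (‖c a - c b‖)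
        nlinarith [norm_nonneg (c a - c b)]
      exact sub_eq_zero.1 (norm_eq_zero.1 h3)
  obtain ⟨m, hsm⟩ := hm
  have hother : ∀ j, j ≠ m → -s m ≤ s j := fun j hj => by
    have := hsnn j m hj; linarith
  have hpos : ∀ j, j ≠ m → 0 < s j := fun j hj =>
    lt_of_lt_of_le (by linarith) (hother j hj)
  have hs2 : (Real.sqrt 2 / 2) ^ 2 = 1 / 2 := by
    rw [div_pow, Real.sq_sqrt (by norm_num : (0:ℝ) ≤ 2)]; norm_num
  have hrm : Real.sqrt 2 / 2 < r m := by
    have h2 : 1 / 2 < r m ^ 2 := by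
      have h3 := hsm
      simp only [hs] at h3
      linarith
    nlinarith [hrnn m, Real.sqrt_nonneg 2, hs2]
  have hrless : ∀ j, j ≠ m → r j < Real.sqrt 2 / 2 := by
    intro j hj
    have h2 : r j ^ 2 < 1 / 2 := by
      have h3 := hpos j hj
      simp only [hs] at h3
      linarith
    nlinarith [hrnn j, Real.sqrt_nonneg 2, hs2]
  have hrmax : ∀ j, r j ≤ r m := by
    intro j
    by_cases hj : j = m
    · rw [hj]
    · exact le_of_lt (lt_trans (hrless j hj) hrm)
  have hthird : ∀ i, i ≠ m → ∃ k, k ≠ i ∧ k ≠ m := by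
    intro i hi
    by_contra h
    push_neg at h
    have hsub : (Finset.univ : Finset (Fin I)) ⊆ {i, m} := by
      intro k _
      simp only [Finset.mem_insert, Finset.mem_singleton]
      rcases eq_or_ne k i with h' | h'
      · exact Or.inl h'
      · exact Or.inr (h k h')
    have h1 := Finset.card_le_card hsub
    have h2 : ({i, m} : Finset (Fin I)).card ≤ 2 :=
      le_trans (Finset.card_insert_le _ _) (by simp)
    rw [Finset.card_univ, Fintype.card_fin] at h1
    omega
  -- Step C
  have hstepC : ∀ i, i ≠ m → c i ∉ convexHull ℝ (c '' {j | j ≠ i}) := by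
    intro i him hmem
    obtain ⟨u, hun, hu0, hus, hux⟩ := aux_exists_weights_convex c {j | j ≠ i} hmem
    have hui : u i = 0 := hu0 i (by simp)
    have hgram := aux_gram hdist i u hui hus
    rw [← hux, sub_self, norm_zero] at hgram
    have hgram' : s i + ∑ j, u j ^ 2 * s j = 0 := by
      have h0 : (0:ℝ) ^ 2 = 0 := by norm_num
      linarith [hgram]
    have hub : ∀ j, u j ≤ 1 := by
      intro j
      have h4 := Finset.single_le_sum (f := u) (fun k _ => hun k) (Finset.mem_univ j)
      linarith [hus]
    have hterm : ∀ j, u j * s m ≤ u j ^ 2 * s j := by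
      intro j
      by_cases hj : j = m
      · subst hj
        have h1 : u j ^ 2 ≤ u j := by nlinarith [hun j, hub j]
        nlinarith [hsm]
      · have h5 := hpos j hj
        nlinarith [hun j, hsm, sq_nonneg (u j)]
    have hsum2 : s m ≤ ∑ j, u j ^ 2 * s j := by
      calc s m = ∑ j, u j * s m := by rw [← Finset.sum_mul, hus, one_mul]
      _ ≤ ∑ j, u j ^ 2 * s j := Finset.sum_le_sum fun j _ => hterm j
    have him2 : ‖c i - c m‖ ^ 2 ≤ 0 := by
      rw [hdist i m him]; linarith
    have hcim : c i = c m := by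
      have h0 : ‖c i - c m‖ = 0 := by
        nlinarith [norm_nonneg (c i - c m), sq_nonneg (‖c i - c m‖)]
      exact sub_eq_zero.1 (norm_eq_zero.1 h0)
    obtain ⟨k, hki, hkm⟩ := hthird i him
    have e1 := hdist i k (fun h => hki h.symm)
    have e2 := hdist m k (fun h => hkm h.symm)
    rw [hcim] at e1
    have hsim : s i = s m := by linarith
    have := hpos i him
    linarith
  -- Step B
  have hstepB : c m ∈ convexHull ℝ (c '' {j | j ≠ m}) := by
    obtain ⟨u, hum, hus, hueq⟩ := hEQ m
    set T : ℝ := ∑ j, |u j| with hT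
    have hT1 : 1 ≤ T := by
      calc (1:ℝ) = |∑ j, u j| := by rw [hus]; norm_num
      _ ≤ T := Finset.abs_sum_le_sum_abs u Finset.univ
    have hTpos : 0 < T := by linarith
    have hnt : ∃ j0 : Fin I, j0 ≠ m := by
      have h0 : 0 < I := by omega
      have h1 : 1 < I := by omega
      by_cases h : (⟨0, h0⟩ : Fin I) = m
      · exact ⟨⟨1, h1⟩, by rw [← h]; simp [Fin.ext_iff]⟩
      · exact ⟨⟨0, h0⟩, h⟩
    obtain ⟨j0, hj0⟩ := hnt
    set u' : Fin I → ℝ := fun j => |u j| / T with hu'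
    set ee : Fin I → ℝ := fun j => if j = j0 then 1 else 0 with hee
    have hu'm : u' m = 0 := by simp [hu', hum]
    have hu'nn : ∀ j, 0 ≤ u' j := fun j => by
      simp only [hu']; positivity
    have hu's : ∑ j, u' j = 1 := by
      simp only [hu']
      rw [← Finset.sum_div, ← hT, div_self (ne_of_gt hTpos)]
    have heenn : ∀ j, 0 ≤ ee j := fun j => by
      simp only [hee]; split <;> norm_num
    have hees : ∑ j, ee j = 1 := by simp [hee]
    have hueq' : ∑ j, u j ^ 2 * s j = -s m := by linarith
    have hq1 : ∑ j, u' j ^ 2 * s j = (-s m) / T ^ 2 := by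
      have hterm : ∀ j : Fin I, u' j ^ 2 * s j = u j ^ 2 * s j / T ^ 2 := by
        intro j
        simp only [hu']
        rw [div_pow, sq_abs]
        ring
      rw [Finset.sum_congr rfl fun j _ => hterm j, ← Finset.sum_div, hueq']
    have hq1le : ∑ j, u' j ^ 2 * s j ≤ -s m := by
      rw [hq1]
      have hT2 : 1 ≤ T ^ 2 := by nlinarith [hT1]
      exact div_le_self (by linarith) hT2
    have hq0 : ∑ j, ee j ^ 2 * s j = s j0 := by
      have hterm : ∀ j : Fin I, ee j ^ 2 * s j = if j = j0 then s j else 0 := by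
        intro j
        simp only [hee]
        split <;> simp
      rw [Finset.sum_congr rfl fun j _ => hterm j]
      simp [Finset.sum_ite_eq']
    have hq0ge : -s m ≤ ∑ j, ee j ^ 2 * s j := by
      rw [hq0]; exact hother j0 hj0
    set f : ℝ → ℝ := fun t => ∑ j, (t * u' j + (1 - t) * ee j) ^ 2 * s j with hf
    have hcont : ContinuousOn f (Set.Icc (0:ℝ) 1) := by
      apply Continuous.continuousOn
      apply continuous_finset_sum
      intro j _
      fun_prop
    have hf0 : f 0 = ∑ j, ee j ^ 2 * s j := by
      have h' : f 0 = ∑ j, ((0:ℝ) * u' j + (1 - 0) * ee j) ^ 2 * s j := rfl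
      rw [h']
      exact Finset.sum_congr rfl fun j _ => by ring
    have hf1 : f 1 = ∑ j, u' j ^ 2 * s j := by
      have h' : f 1 = ∑ j, ((1:ℝ) * u' j + (1 - 1) * ee j) ^ 2 * s j := rfl
      rw [h']
      exact Finset.sum_congr rfl fun j _ => by ring
    have hIcc : (-s m) ∈ Set.Icc (f 1) (f 0) := by
      rw [hf0, hf1]; exact ⟨hq1le, hq0ge⟩
    obtain ⟨t, htI, htf⟩ :=
      intermediate_value_Icc' (by norm_num : (0:ℝ) ≤ 1) hcont hIcc
    obtain ⟨ht0, ht1⟩ := htI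
    set v : Fin I → ℝ := fun j => t * u' j + (1 - t) * ee j with hv
    have hvnn : ∀ j, 0 ≤ v j := fun j =>
      add_nonneg (mul_nonneg ht0 (hu'nn j)) (mul_nonneg (by linarith) (heenn j))
    have hvm : v m = 0 := by
      simp only [hv, hu'm, hee, mul_zero, zero_add]
      rw [if_neg (fun h => hj0 h.symm)]
      ring
    have hvs : ∑ j, v j = 1 := by
      simp only [hv]
      rw [Finset.sum_add_distrib, ← Finset.mul_sum, ← Finset.mul_sum, hu's, hees]
      ring
    have hveq : ∑ j, v j ^ 2 * s j = -s m := htf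
    have hgram := aux_gram hdist m v hvm hvs
    have h0 : ‖c m - ∑ j, v j • c j‖ ^ 2 = 0 := by rw [hgram, hveq]; ring
    have hceq : c m = ∑ j, v j • c j := by
      have h1 : ‖c m - ∑ j, v j • c j‖ = 0 := by
        nlinarith [norm_nonneg (c m - ∑ j, v j • c j)]
      exact sub_eq_zero.1 (norm_eq_zero.1 h1)
    have hes : ∑ j ∈ Finset.univ.erase m, v j = 1 := by
      rw [Finset.sum_erase _ (by rw [hvm])]
      exact hvs
    rw [hceq, show (∑ j, v j • c j) = ∑ j ∈ Finset.univ.erase m, v j • c j from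
      (Finset.sum_erase _ (by rw [hvm, zero_smul])).symm,
      ← Finset.centerMass_eq_of_sum_1 _ c hes]
    exact Finset.centerMass_mem_convexHull _ (fun j _ => hvnn j)
      (by rw [hes]; norm_num)
      (fun j hj => ⟨j, Finset.ne_of_mem_erase hj, rfl⟩)
  -- assembly
  intro i
  by_cases hi : i = m
  · subst hi
    exact ⟨⟨fun _ => hrm, fun _ => hstepB⟩, ⟨fun _ => hrmax, fun _ => hstepB⟩⟩
  · have hnc := hstepC i hi
    have hr1 : ¬ Real.sqrt 2 / 2 < r i := not_lt.2 (le_of_lt (hrless i hi))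
    have hr2 : ¬ ∀ j, r j ≤ r i := fun h =>
      absurd (h m) (not_le.2 (lt_trans (hrless i hi) hrm))
    exact ⟨⟨fun h => absurd h hnc, fun h => absurd h hr1⟩,
      ⟨fun h => absurd h hnc, fun h => absurd h hr2⟩⟩
end

section
/- Let △ be a simplex in ℝⁿ with vertices x₁, ..., x_k admitting an orthocenter x* (i.e., x* - x_i is orthogonal to x_j - x_l for all j, l distinct from i, for each i). Let J ⊆ {1,...,k} and let A_J be the affine hull of {x_j : j ∈ J}. Then the orthogonal projection of x* onto A_J is the orthocenter of the face spanned by {x_j : j ∈ J}. -/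
open RealInnerProductSpace

/-- Orthocentricity is invariant under face projection: if `xstar` is the
orthocenter of the simplex with vertices `x 1, ..., x k` and `p` is the
orthogonal projection of `xstar` onto the affine hull of the face with vertex
set `J`, then `p` is the orthocenter of that face. -/
theorem orthocenter_projects_to_face_orthocenter {n k : ℕ}
    (x : Fin k → EuclideanSpace ℝ (Fin n)) (hindep : AffineIndependent ℝ x)
    (xstar : EuclideanSpace ℝ (Fin n))
    (horth : ∀ i j l : Fin k, j ≠ i → l ≠ i → ⟪xstar - x i, x j - x l⟫ = 0)
    (J : Set (Fin k)) (p : EuclideanSpace ℝ (Fin n))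
    (hp1 : p ∈ affineSpan ℝ (x '' J))
    (hp2 : ∀ z ∈ affineSpan ℝ (x '' J), ⟪xstar - p, z - p⟫ = 0) :
    ∀ j ∈ J, ∀ a ∈ J, ∀ b ∈ J, a ≠ j → b ≠ j →
      ⟪p - x j, x a - x b⟫ = 0 := by
  intro j hj a ha b hb haj hbj
  have hxa : x a ∈ affineSpan ℝ (x '' J) := subset_affineSpan ℝ _ ⟨a, ha, rfl⟩
  have hxb : x b ∈ affineSpan ℝ (x '' J) := subset_affineSpan ℝ _ ⟨b, hb, rfl⟩
  have h1 := hp2 _ hxa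
  have h2 := hp2 _ hxb
  have h3 : ⟪xstar - p, x a - x b⟫ = 0 := by
    have : x a - x b = (x a - p) - (x b - p) := by abel
    rw [this, inner_sub_right, h1, h2, sub_zero]
  have h4 := horth j a b haj hbj
  have : (p : EuclideanSpace ℝ (Fin n)) - x j = (xstar - x j) - (xstar - p) := by abel
  rw [this, inner_sub_left, h3, h4, sub_zero]
end
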